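/- arXiv:1705.02805 — 4 statements merged into one kernel-verified Lean document; each statement's English description precedes it below -/
import Mathlib

section
/- Let u ∈ C^∞(ℝ³;ℝ³) ∩ H^l(ℝ³) and let G satisfy the stated structural conditions. For a multi-derivative ∂^n = ∂_{x_{σ(n)}}···∂_{x_{σ(1)}} (with each σ(i) ∈ {1,2,3}), define E_n := ∂^n G[|Du|²] − 2 G'[|Du|²](Du : ∂^n Du). Then there is a constant C, depending only on the structural constants of G, such that pointwise on ℝ³: |E₂| ≤ C G[|Du|²] |∇Du|², and |E₃| ≤ C G[|Du|²] (|∇Du|³ + |∇²Du| |∇Du|). -/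
open MeasureTheory Set ENNReal

noncomputable section

/-- Points of ℝ³. -/
abbrev E3 : Type := Fin 3 → ℝ

/-- 3×3 real matrices (as nested functions). -/
abbrev Mat3 : Type := Fin 3 → Fin 3 → ℝ

/-- Partial derivative in the `i`-th coordinate direction. -/
def pd {F : Type*} [NormedAddCommGroup F] [NormedSpace ℝ F]
    (i : Fin 3) (f : E3 → F) (x : E3) : F :=
  fderiv ℝ f x (Pi.single i 1)

/-- Iterated directional partial derivative ∂_{σ(n)} ⋯ ∂_{σ(1)}. -/
def pdIter {F : Type*} [NormedAddCommGroup F] [NormedSpace ℝ F]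
    (σ : ℕ → Fin 3) : ℕ → (E3 → F) → (E3 → F)
  | 0, f => f
  | n + 1, f => pd (σ (n + 1)) (pdIter σ n f)

/-- Symmetric gradient `Du`. -/
def symGrad (u : E3 → E3) (x : E3) : Mat3 :=
  fun i j => (pd j (fun y => u y i) x + pd i (fun y => u y j) x) / 2

/-- Frobenius inner product `A : B`. -/
def mdot (A B : Mat3) : ℝ := ∑ i, ∑ j, A i j * B i j

/-- `|A|² = A : A`. -/
def msq (A : Mat3) : ℝ := mdot A A

/-- Divergence of a vector field. -/
def divVec (u : E3 → E3) (x : E3) : ℝ := ∑ i, pd i (fun y => u y i) x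

/-- A vector field is divergence free. -/
def divFree (u : E3 → E3) : Prop := ∀ x, divVec u x = 0

/-- Structural conditions on the viscosity function `G`. -/
structure GoodG (G : ℝ → ℝ) (m₀ : ℝ) (C : ℕ → ℝ) : Prop where
  smooth : ContDiff ℝ (⊤ : ℕ∞) G
  m₀_pos : 0 < m₀
  lower : ∀ s : ℝ, 0 ≤ s → m₀ ≤ G s
  lower' : ∀ s : ℝ, 0 ≤ s → m₀ ≤ G s + 2 * deriv G s * s
  deriv_bound : ∀ k : ℕ, 1 ≤ k → ∀ s : ℝ, 0 ≤ s → ∀ a : ℕ, a ≤ 1 →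
    |iteratedDeriv k G s * s ^ a| ≤ C k * |iteratedDeriv (k - 1) G s|

/-- The viscous stress tensor `G[|Du|²] Du`. -/
def stress (G : ℝ → ℝ) (u : E3 → E3) (x : E3) : Mat3 :=
  fun i j => G (msq (symGrad u x)) * symGrad u x i j

/-- The non-Newtonian system `∂ₜu − div(G[|Du|²]Du) + (u·∇)u + ∇p = 0`, `div u = 0`,
pointwise on `ℝ³ × (0, T)`. -/
def NNSystem (G : ℝ → ℝ) (u : ℝ → E3 → E3) (p : ℝ → E3 → ℝ) (T : ℝ) : Prop :=
  ∀ t : ℝ, 0 < t → t < T →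
    divFree (u t) ∧
    ∀ x : E3, ∀ i : Fin 3,
      deriv (fun s => u s x i) t
        - (∑ j, pd j (fun y => stress G (u t) y i j) x)
        + (∑ j, u t x j * pd j (fun y => u t y i) x)
        + pd i (p t) x = 0

/-- Sobolev `H^l`-norm (valued in `ℝ≥0∞`). -/
def HNorm {F : Type*} [NormedAddCommGroup F] [NormedSpace ℝ F]
    (l : ℕ) (f : E3 → F) : ℝ≥0∞ :=
  ∑ k ∈ Finset.range (l + 1), eLpNorm (fun x => iteratedFDeriv ℝ k f x) 2 volume

/-- Membership in the class `L^∞(0,T;H^l) ∩ L²(0,T;H^{l+1})`. -/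
def InClassX (l : ℕ) (T : ℝ) (u : ℝ → E3 → E3) : Prop :=
  (⨆ t ∈ Icc (0:ℝ) T, HNorm l (u t)) < ⊤ ∧
  (∫⁻ t in Icc (0:ℝ) T, (HNorm (l + 1) (u t)) ^ 2) < ⊤

/-- Time derivative of a time-dependent field. -/
def tD {F : Type*} [NormedAddCommGroup F] [NormedSpace ℝ F]
    (f : ℝ → E3 → F) : ℝ → E3 → F :=
  fun t x => deriv (fun s => f s x) t

/-- The error term `E_n = ∂ⁿ(G[|Du|²]) − 2 G'[|Du|²](Du : ∂ⁿDu)`. -/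
def Eerr (G : ℝ → ℝ) (u : E3 → E3) (σ : ℕ → Fin 3) (n : ℕ) (x : E3) : ℝ :=
  pdIter σ n (fun y => G (msq (symGrad u y))) x
    - 2 * deriv G (msq (symGrad u x)) *
        mdot (symGrad u x) (fun i j => pdIter σ n (fun y => symGrad u y i j) x)

/-- Entrywise iterated derivative of `Du`. -/
def DuIter (u : E3 → E3) (τ : ℕ → Fin 3) (n : ℕ) (x : E3) : Mat3 :=
  fun i j => pdIter τ n (fun y => symGrad u y i j) x

end

noncomputable section Aux

namespace EerrAux

lemma contDiff_pd {F : Type*} [NormedAddCommGroup F] [NormedSpace ℝ F]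
    {f : E3 → F} (hf : ContDiff ℝ (⊤ : ℕ∞) f) (i : Fin 3) :
    ContDiff ℝ (⊤ : ℕ∞) (pd i f) := by
  have h1 : ContDiff ℝ (⊤ : ℕ∞) (fderiv ℝ f) := hf.fderiv_right (by exact_mod_cast le_top)
  exact h1.clm_apply contDiff_const

lemma pd_mul {x : E3} {f g : E3 → ℝ} (hf : DifferentiableAt ℝ f x) (hg : DifferentiableAt ℝ g x)
    (i : Fin 3) : pd i (fun y => f y * g y) x = pd i f x * g x + f x * pd i g x := by
  simp only [pd, fderiv_fun_mul hf hg]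
  simp only [ContinuousLinearMap.add_apply, ContinuousLinearMap.smul_apply, smul_eq_mul]
  ring

lemma pd_const_mul {x : E3} {f : E3 → ℝ} (hf : DifferentiableAt ℝ f x) (c : ℝ)
    (i : Fin 3) : pd i (fun y => c * f y) x = c * pd i f x := by
  simp [pd, fderiv_const_mul hf c]

lemma pd_sum {ι : Type*} (s : Finset ι) {f : ι → E3 → ℝ} {x : E3}
    (hf : ∀ j ∈ s, DifferentiableAt ℝ (f j) x) (i : Fin 3) :
    pd i (fun y => ∑ j ∈ s, f j y) x = ∑ j ∈ s, pd i (f j) x := by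
  have := fderiv_fun_sum (𝕜 := ℝ) (u := s) (A := f) (x := x) hf
  simp [pd, this]

lemma pd_comp {G : ℝ → ℝ} (hG : ContDiff ℝ (⊤ : ℕ∞) G) {q : E3 → ℝ} {x : E3}
    (hq : DifferentiableAt ℝ q x) (i : Fin 3) :
    pd i (fun y => G (q y)) x = deriv G (q x) * pd i q x := by
  have h1 : HasDerivAt G (deriv G (q x)) (q x) :=
    (hG.differentiable (by simp) (q x)).hasDerivAt
  have h2 := h1.comp_hasFDerivAt x hq.hasFDerivAt
  have h3 : fderiv ℝ (fun y => G (q y)) x = deriv G (q x) • fderiv ℝ q x := h2.fderiv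
  simp [pd, h3]

def projM (i j : Fin 3) : Mat3 →L[ℝ] ℝ :=
  (ContinuousLinearMap.proj j).comp (ContinuousLinearMap.proj (R := ℝ) (φ := fun _ : Fin 3 => E3) i)

lemma norm_single_one (k : Fin 3) : ‖(Pi.single k 1 : E3)‖ = 1 := by
  rw [Pi.norm_single]; simp

lemma pd_entry {f : E3 → Mat3} (hf : ContDiff ℝ (⊤ : ℕ∞) f) (i j k : Fin 3) (x : E3) :
    pd k (fun y => f y i j) x = fderiv ℝ f x (Pi.single k 1) i j := by
  have hd : DifferentiableAt ℝ f x := hf.differentiable (by simp) x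
  have h : HasFDerivAt (fun y => projM i j (f y)) ((projM i j).comp (fderiv ℝ f x)) x :=
    (projM i j).hasFDerivAt.comp x hd.hasFDerivAt
  have : pd k (fun y => projM i j (f y)) x = projM i j (fderiv ℝ f x (Pi.single k 1)) := by
    simp [pd, h.fderiv]
  simpa [projM] using this

lemma abs_pd_entry_le {f : E3 → Mat3} (hf : ContDiff ℝ (⊤ : ℕ∞) f) (i j k : Fin 3) (x : E3) :
    |pd k (fun y => f y i j) x| ≤ ‖iteratedFDeriv ℝ 1 f x‖ := by
  rw [pd_entry hf, ← Real.norm_eq_abs]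
  have h1 : ‖fderiv ℝ f x (Pi.single k 1) i j‖ ≤ ‖fderiv ℝ f x (Pi.single k 1)‖ := by
    calc ‖fderiv ℝ f x (Pi.single k 1) i j‖ ≤ ‖fderiv ℝ f x (Pi.single k 1) i‖ :=
          norm_le_pi_norm _ j
    _ ≤ ‖fderiv ℝ f x (Pi.single k 1)‖ := norm_le_pi_norm _ i
  refine h1.trans ?_
  have h2 : fderiv ℝ f x (Pi.single k 1) = iteratedFDeriv ℝ 1 f x (fun _ => Pi.single k 1) := by
    rw [iteratedFDeriv_one_apply]
  rw [h2]
  calc ‖iteratedFDeriv ℝ 1 f x (fun _ => Pi.single k 1)‖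
      ≤ ‖iteratedFDeriv ℝ 1 f x‖ * ∏ _i : Fin 1, ‖(Pi.single k 1 : E3)‖ :=
        ContinuousMultilinearMap.le_opNorm _ _
    _ = ‖iteratedFDeriv ℝ 1 f x‖ := by simp [norm_single_one]

lemma pd_pd_entry {f : E3 → Mat3} (hf : ContDiff ℝ (⊤ : ℕ∞) f) (i j k l : Fin 3) (x : E3) :
    pd k (fun y => pd l (fun z => f z i j) y) x
      = fderiv ℝ (fderiv ℝ f) x (Pi.single k 1) (Pi.single l 1) i j := by
  have hf' : ContDiff ℝ (⊤ : ℕ∞) (fderiv ℝ f) := hf.fderiv_right (by exact_mod_cast le_top)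
  have hd : DifferentiableAt ℝ (fderiv ℝ f) x := hf'.differentiable (by simp) x
  set M : (E3 →L[ℝ] Mat3) →L[ℝ] ℝ :=
    (projM i j).comp (ContinuousLinearMap.apply ℝ Mat3 (Pi.single l 1)) with hM
  have heq : (fun y => pd l (fun z => f z i j) y) = fun y => M (fderiv ℝ f y) := by
    funext y
    rw [pd_entry hf]
    simp [hM, projM, ContinuousLinearMap.apply]
  rw [heq]
  have h : HasFDerivAt (fun y => M (fderiv ℝ f y)) (M.comp (fderiv ℝ (fderiv ℝ f) x)) x :=
    M.hasFDerivAt.comp x hd.hasFDerivAt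
  show fderiv ℝ (fun y => M (fderiv ℝ f y)) x (Pi.single k 1) = _
  rw [h.fderiv]
  simp [hM, projM, ContinuousLinearMap.apply]

lemma abs_pd_pd_entry_le {f : E3 → Mat3} (hf : ContDiff ℝ (⊤ : ℕ∞) f) (i j k l : Fin 3) (x : E3) :
    |pd k (fun y => pd l (fun z => f z i j) y) x| ≤ ‖iteratedFDeriv ℝ 2 f x‖ := by
  rw [pd_pd_entry hf, ← Real.norm_eq_abs]
  have h1 : ‖fderiv ℝ (fderiv ℝ f) x (Pi.single k 1) (Pi.single l 1) i j‖
      ≤ ‖fderiv ℝ (fderiv ℝ f) x (Pi.single k 1) (Pi.single l 1)‖ :=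
    (norm_le_pi_norm _ j).trans (norm_le_pi_norm _ i)
  refine h1.trans ?_
  have h2 : fderiv ℝ (fderiv ℝ f) x (Pi.single k 1) (Pi.single l 1)
      = iteratedFDeriv ℝ 2 f x ![Pi.single k 1, Pi.single l 1] := by
    rw [iteratedFDeriv_two_apply]; rfl
  rw [h2]
  calc ‖iteratedFDeriv ℝ 2 f x ![Pi.single k 1, Pi.single l 1]‖
      ≤ ‖iteratedFDeriv ℝ 2 f x‖ * ∏ i : Fin 2, ‖(![Pi.single k 1, Pi.single l 1] : Fin 2 → E3) i‖ :=
        ContinuousMultilinearMap.le_opNorm _ _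
    _ ≤ ‖iteratedFDeriv ℝ 2 f x‖ := by
        rw [Fin.prod_univ_two]
        simp [norm_single_one]

end EerrAux

end Aux

noncomputable section Aux2

namespace EerrAux

def ent (D : E3 → Mat3) : Fin 3 → Fin 3 → E3 → ℝ := fun i j y => D y i j
def d1 (D : E3 → Mat3) (k : Fin 3) : Fin 3 → Fin 3 → E3 → ℝ := fun i j => pd k (ent D i j)
def d2 (D : E3 → Mat3) (k l : Fin 3) : Fin 3 → Fin 3 → E3 → ℝ := fun i j => pd k (d1 D l i j)
def d3 (D : E3 → Mat3) (k l m : Fin 3) : Fin 3 → Fin 3 → E3 → ℝ := fun i j => pd k (d2 D l m i j)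
def dotp (F H : Fin 3 → Fin 3 → E3 → ℝ) : E3 → ℝ :=
  fun y => ∑ p : Fin 3 × Fin 3, F p.1 p.2 y * H p.1 p.2 y
def qD (D : E3 → Mat3) : E3 → ℝ := dotp (ent D) (ent D)

lemma dotp_eq_mdot (F H : Fin 3 → Fin 3 → E3 → ℝ) (x : E3) :
    dotp F H x = mdot (fun i j => F i j x) (fun i j => H i j x) := by
  simp [dotp, mdot, Fintype.sum_prod_type]

lemma dotp_comm (F H : Fin 3 → Fin 3 → E3 → ℝ) : dotp F H = dotp H F := by
  funext y; unfold dotp; exact Finset.sum_congr rfl fun p _ => mul_comm _ _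

lemma qD_eq (D : E3 → Mat3) (x : E3) : qD D x = msq (D x) := by
  simp [qD, dotp_eq_mdot, msq, ent]

section withD
variable {D : E3 → Mat3} (hD : ContDiff ℝ (⊤ : ℕ∞) D)
include hD

lemma cd_ent (i j : Fin 3) : ContDiff ℝ (⊤ : ℕ∞) (ent D i j) := by
  have h1 := contDiff_pi.mp hD i
  exact contDiff_pi.mp h1 j

lemma cd_d1 (k i j : Fin 3) : ContDiff ℝ (⊤ : ℕ∞) (d1 D k i j) :=
  contDiff_pd (cd_ent hD i j) k

lemma cd_d2 (k l i j : Fin 3) : ContDiff ℝ (⊤ : ℕ∞) (d2 D k l i j) :=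
  contDiff_pd (cd_d1 hD l i j) k

lemma cd_d3 (k l m i j : Fin 3) : ContDiff ℝ (⊤ : ℕ∞) (d3 D k l m i j) :=
  contDiff_pd (cd_d2 hD l m i j) k

omit hD in
lemma cd_dotp {F H : Fin 3 → Fin 3 → E3 → ℝ}
    (hF : ∀ i j, ContDiff ℝ (⊤ : ℕ∞) (F i j)) (hH : ∀ i j, ContDiff ℝ (⊤ : ℕ∞) (H i j)) :
    ContDiff ℝ (⊤ : ℕ∞) (dotp F H) :=
  ContDiff.sum fun p _ => (hF p.1 p.2).mul (hH p.1 p.2)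

lemma cd_q : ContDiff ℝ (⊤ : ℕ∞) (qD D) := cd_dotp (cd_ent hD) (cd_ent hD)

omit hD in
lemma pd_dotp {F H : Fin 3 → Fin 3 → E3 → ℝ}
    (hF : ∀ i j, ContDiff ℝ (⊤ : ℕ∞) (F i j)) (hH : ∀ i j, ContDiff ℝ (⊤ : ℕ∞) (H i j))
    (k : Fin 3) (x : E3) :
    pd k (dotp F H) x
      = dotp (fun i j => pd k (F i j)) H x + dotp F (fun i j => pd k (H i j)) x := by
  unfold dotp
  rw [pd_sum Finset.univ (fun p _ =>
    (((hF p.1 p.2).mul (hH p.1 p.2)).differentiable (by simp) x)) k]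
  rw [← Finset.sum_add_distrib]
  refine Finset.sum_congr rfl fun p _ => ?_
  exact pd_mul ((hF p.1 p.2).differentiable (by simp) x)
    ((hH p.1 p.2).differentiable (by simp) x) k

lemma pd_q (k : Fin 3) (x : E3) :
    pd k (qD D) x = 2 * dotp (ent D) (d1 D k) x := by
  unfold qD
  rw [pd_dotp (cd_ent hD) (cd_ent hD) k x]
  have : dotp (fun i j => pd k (ent D i j)) (ent D) x = dotp (ent D) (d1 D k) x := by
    rw [dotp_comm]; rfl
  rw [this]
  have : dotp (ent D) (fun i j => pd k (ent D i j)) x = dotp (ent D) (d1 D k) x := rfl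
  rw [this]; ring

lemma pd_comp_q {φ : ℝ → ℝ} (hφ : ContDiff ℝ (⊤ : ℕ∞) φ) (k : Fin 3) (x : E3) :
    pd k (fun y => φ (qD D y)) x
      = deriv φ (qD D x) * (2 * dotp (ent D) (d1 D k) x) := by
  rw [pd_comp hφ ((cd_q hD).differentiable (by simp) x) k, pd_q hD]

end withD

end EerrAux

end Aux2

noncomputable section Aux3

namespace EerrAux

lemma pd_add {x : E3} {f g : E3 → ℝ} (hf : DifferentiableAt ℝ f x)
    (hg : DifferentiableAt ℝ g x) (i : Fin 3) :
    pd i (fun y => f y + g y) x = pd i f x + pd i g x := by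
  simp [pd, fderiv_fun_add hf hg]

section level23
variable {D : E3 → Mat3} (hD : ContDiff ℝ (⊤ : ℕ∞) D)
variable {G : ℝ → ℝ} (hGs : ContDiff ℝ (⊤ : ℕ∞) G)
include hD hGs

lemma pd2_comp (k l : Fin 3) (x : E3) :
    pd l (fun y => pd k (fun z => G (qD D z)) y) x
      = deriv (deriv G) (qD D x) * (2 * dotp (ent D) (d1 D l) x)
            * (2 * dotp (ent D) (d1 D k) x)
        + deriv G (qD D x)
            * (2 * (dotp (d1 D l) (d1 D k) x + dotp (ent D) (d2 D l k) x)) := by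
  have hGd : ContDiff ℝ (⊤ : ℕ∞) (deriv G) := (contDiff_infty_iff_deriv.mp hGs).2
  have hfun : (fun y => pd k (fun z => G (qD D z)) y)
      = fun y => deriv G (qD D y) * (2 * dotp (ent D) (d1 D k) y) :=
    funext fun y => pd_comp_q hD hGs k y
  rw [hfun]
  have hcd1 : ContDiff ℝ (⊤ : ℕ∞) (fun y => deriv G (qD D y)) := hGd.comp (cd_q hD)
  have hcd2 : ContDiff ℝ (⊤ : ℕ∞) (dotp (ent D) (d1 D k)) :=
    cd_dotp (cd_ent hD) (fun i j => cd_d1 hD k i j)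
  have hf1 : DifferentiableAt ℝ (fun y => deriv G (qD D y)) x :=
    hcd1.differentiable (by simp) x
  have hf2 : DifferentiableAt ℝ (fun y => 2 * dotp (ent D) (d1 D k) y) x :=
    (contDiff_const.mul hcd2).differentiable (by simp) x
  rw [pd_mul hf1 hf2 l, pd_comp_q hD hGd l,
    pd_const_mul (hcd2.differentiable (by simp) x) 2 l,
    pd_dotp (cd_ent hD) (fun i j => cd_d1 hD k i j) l x]
  have e1 : dotp (fun i j => pd l (ent D i j)) (d1 D k) x = dotp (d1 D l) (d1 D k) x := rfl
  have e2 : dotp (ent D) (fun i j => pd l (d1 D k i j)) x = dotp (ent D) (d2 D l k) x := rfl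
  rw [e1, e2]

lemma pd3_comp (k l m : Fin 3) (x : E3) :
    pd m (fun y => pd l (fun z => pd k (fun w => G (qD D w)) z) y) x
      = deriv (deriv (deriv G)) (qD D x) * (2 * dotp (ent D) (d1 D m) x)
            * (2 * dotp (ent D) (d1 D l) x) * (2 * dotp (ent D) (d1 D k) x)
        + deriv (deriv G) (qD D x)
            * (2 * (dotp (d1 D m) (d1 D l) x + dotp (ent D) (d2 D m l) x))
            * (2 * dotp (ent D) (d1 D k) x)
        + deriv (deriv G) (qD D x) * (2 * dotp (ent D) (d1 D l) x)
            * (2 * (dotp (d1 D m) (d1 D k) x + dotp (ent D) (d2 D m k) x))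
        + deriv (deriv G) (qD D x) * (2 * dotp (ent D) (d1 D m) x)
            * (2 * (dotp (d1 D l) (d1 D k) x + dotp (ent D) (d2 D l k) x))
        + deriv G (qD D x)
            * (2 * (dotp (d2 D m l) (d1 D k) x + dotp (d1 D l) (d2 D m k) x
                + dotp (d1 D m) (d2 D l k) x + dotp (ent D) (d3 D m l k) x)) := by
  have hGd : ContDiff ℝ (⊤ : ℕ∞) (deriv G) := (contDiff_infty_iff_deriv.mp hGs).2
  have hGdd : ContDiff ℝ (⊤ : ℕ∞) (deriv (deriv G)) := (contDiff_infty_iff_deriv.mp hGd).2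
  have hfun : (fun y => pd l (fun z => pd k (fun w => G (qD D w)) z) y)
      = fun y => (deriv (deriv G) (qD D y) * (2 * dotp (ent D) (d1 D l) y)
            * (2 * dotp (ent D) (d1 D k) y))
          + (deriv G (qD D y)
            * (2 * (dotp (d1 D l) (d1 D k) y + dotp (ent D) (d2 D l k) y))) :=
    funext fun y => pd2_comp hD hGs k l y
  rw [hfun]
  -- differentiability facts
  have cg1 : ContDiff ℝ (⊤ : ℕ∞) (fun y => deriv G (qD D y)) := hGd.comp (cd_q hD)
  have cg2 : ContDiff ℝ (⊤ : ℕ∞) (fun y => deriv (deriv G) (qD D y)) := hGdd.comp (cd_q hD)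
  have cSl : ContDiff ℝ (⊤ : ℕ∞) (dotp (ent D) (d1 D l)) :=
    cd_dotp (cd_ent hD) (fun i j => cd_d1 hD l i j)
  have cSk : ContDiff ℝ (⊤ : ℕ∞) (dotp (ent D) (d1 D k)) :=
    cd_dotp (cd_ent hD) (fun i j => cd_d1 hD k i j)
  have cM : ContDiff ℝ (⊤ : ℕ∞) (dotp (d1 D l) (d1 D k)) :=
    cd_dotp (fun i j => cd_d1 hD l i j) (fun i j => cd_d1 hD k i j)
  have cU : ContDiff ℝ (⊤ : ℕ∞) (dotp (ent D) (d2 D l k)) :=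
    cd_dotp (cd_ent hD) (fun i j => cd_d2 hD l k i j)
  have dtop : ((⊤ : ℕ∞) : WithTop ℕ∞) = (⊤ : WithTop ℕ∞) → True := fun _ => trivial
  have cA : ContDiff ℝ (⊤ : ℕ∞) (fun y => deriv (deriv G) (qD D y)
      * (2 * dotp (ent D) (d1 D l) y)) := cg2.mul (contDiff_const.mul cSl)
  have cB : ContDiff ℝ (⊤ : ℕ∞) (fun y => 2 * dotp (ent D) (d1 D k) y) :=
    contDiff_const.mul cSk
  have cP1 : ContDiff ℝ (⊤ : ℕ∞) (fun y => deriv (deriv G) (qD D y)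
      * (2 * dotp (ent D) (d1 D l) y) * (2 * dotp (ent D) (d1 D k) y)) := cA.mul cB
  have cQ : ContDiff ℝ (⊤ : ℕ∞) (fun y =>
      2 * (dotp (d1 D l) (d1 D k) y + dotp (ent D) (d2 D l k) y)) :=
    contDiff_const.mul (cM.add cU)
  have cP2 : ContDiff ℝ (⊤ : ℕ∞) (fun y => deriv G (qD D y)
      * (2 * (dotp (d1 D l) (d1 D k) y + dotp (ent D) (d2 D l k) y))) := cg1.mul cQ
  have D_ : ∀ {f : E3 → ℝ}, ContDiff ℝ (⊤ : ℕ∞) f → DifferentiableAt ℝ f x :=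
    fun hf => hf.differentiable (by simp) x
  rw [pd_add (D_ cP1) (D_ cP2) m,
    pd_mul (D_ cA) (D_ cB) m,
    pd_mul (D_ cg2) (D_ (contDiff_const.mul cSl)) m,
    pd_mul (D_ cg1) (D_ cQ) m,
    pd_comp_q hD hGdd m, pd_comp_q hD hGd m,
    pd_const_mul (D_ cSl) 2 m, pd_const_mul (D_ cSk) 2 m,
    pd_const_mul (D_ (cM.add cU)) 2 m,
    pd_add (D_ cM) (D_ cU) m,
    pd_dotp (cd_ent hD) (fun i j => cd_d1 hD l i j) m x,
    pd_dotp (cd_ent hD) (fun i j => cd_d1 hD k i j) m x,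
    pd_dotp (fun i j => cd_d1 hD l i j) (fun i j => cd_d1 hD k i j) m x,
    pd_dotp (cd_ent hD) (fun i j => cd_d2 hD l k i j) m x]
  have e1 : dotp (fun i j => pd m (ent D i j)) (d1 D l) x = dotp (d1 D l) (d1 D m) x := by
    rw [dotp_comm]; rfl
  have e1' : dotp (fun i j => pd m (ent D i j)) (d1 D k) x = dotp (d1 D k) (d1 D m) x := by
    rw [dotp_comm]; rfl
  have e2 : dotp (ent D) (fun i j => pd m (d1 D l i j)) x = dotp (ent D) (d2 D m l) x := rfl
  have e2' : dotp (ent D) (fun i j => pd m (d1 D k i j)) x = dotp (ent D) (d2 D m k) x := rfl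
  have e3 : dotp (fun i j => pd m (d1 D l i j)) (d1 D k) x = dotp (d2 D m l) (d1 D k) x := rfl
  have e4 : dotp (d1 D l) (fun i j => pd m (d1 D k i j)) x = dotp (d1 D l) (d2 D m k) x := rfl
  have e5 : dotp (fun i j => pd m (ent D i j)) (d2 D l k) x = dotp (d2 D l k) (d1 D m) x := by
    rw [dotp_comm]; rfl
  have e6 : dotp (ent D) (fun i j => pd m (d2 D l k i j)) x = dotp (ent D) (d3 D m l k) x := rfl
  rw [e1, e1', e2, e2', e3, e4, e5, e6]
  have c1 : dotp (d1 D l) (d1 D m) x = dotp (d1 D m) (d1 D l) x := by rw [dotp_comm]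
  have c2 : dotp (d1 D k) (d1 D m) x = dotp (d1 D m) (d1 D k) x := by rw [dotp_comm]
  have c3 : dotp (d2 D l k) (d1 D m) x = dotp (d1 D m) (d2 D l k) x := by rw [dotp_comm]
  rw [c1, c2, c3]
  ring

end level23

end EerrAux

end Aux3

noncomputable section Aux4

namespace EerrAux

lemma cd_symGrad {u : E3 → E3} (hu : ContDiff ℝ (⊤ : ℕ∞) u) :
    ContDiff ℝ (⊤ : ℕ∞) (symGrad u) := by
  refine contDiff_pi.2 fun i => contDiff_pi.2 fun j => ?_
  have hui : ContDiff ℝ (⊤ : ℕ∞) (fun y => u y i) := contDiff_pi.mp hu i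
  have huj : ContDiff ℝ (⊤ : ℕ∞) (fun y => u y j) := contDiff_pi.mp hu j
  exact ((contDiff_pd hui j).add (contDiff_pd huj i)).div_const 2

section eerr
variable {u : E3 → E3} (hu : ContDiff ℝ (⊤ : ℕ∞) u)
variable {G : ℝ → ℝ} (hGs : ContDiff ℝ (⊤ : ℕ∞) G)
include hu hGs

lemma Eerr2_eq (σ : ℕ → Fin 3) (x : E3) :
    Eerr G u σ 2 x
      = deriv (deriv G) (qD (symGrad u) x)
            * (2 * dotp (ent (symGrad u)) (d1 (symGrad u) (σ 2)) x)
            * (2 * dotp (ent (symGrad u)) (d1 (symGrad u) (σ 1)) x)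
        + deriv G (qD (symGrad u) x)
            * (2 * dotp (d1 (symGrad u) (σ 2)) (d1 (symGrad u) (σ 1)) x) := by
  have hD := cd_symGrad hu
  unfold Eerr
  have h0 : (fun y => G (msq (symGrad u y))) = fun y => G (qD (symGrad u) y) := by
    funext y; rw [qD_eq]
  rw [h0]
  have h1 : pdIter σ 2 (fun y => G (qD (symGrad u) y)) x
      = pd (σ 2) (fun y => pd (σ 1) (fun z => G (qD (symGrad u) z)) y) x := rfl
  rw [h1, pd2_comp hD hGs]
  have h2 : mdot (symGrad u x)
        (fun i j => pdIter σ 2 (fun y => symGrad u y i j) x)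
      = dotp (ent (symGrad u)) (d2 (symGrad u) (σ 2) (σ 1)) x := by
    rw [dotp_eq_mdot]; rfl
  rw [h2, qD_eq]
  ring

lemma Eerr3_eq (σ : ℕ → Fin 3) (x : E3) :
    Eerr G u σ 3 x
      = deriv (deriv (deriv G)) (qD (symGrad u) x)
            * (2 * dotp (ent (symGrad u)) (d1 (symGrad u) (σ 3)) x)
            * (2 * dotp (ent (symGrad u)) (d1 (symGrad u) (σ 2)) x)
            * (2 * dotp (ent (symGrad u)) (d1 (symGrad u) (σ 1)) x)
        + deriv (deriv G) (qD (symGrad u) x)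
            * (2 * (dotp (d1 (symGrad u) (σ 3)) (d1 (symGrad u) (σ 2)) x
                + dotp (ent (symGrad u)) (d2 (symGrad u) (σ 3) (σ 2)) x))
            * (2 * dotp (ent (symGrad u)) (d1 (symGrad u) (σ 1)) x)
        + deriv (deriv G) (qD (symGrad u) x)
            * (2 * dotp (ent (symGrad u)) (d1 (symGrad u) (σ 2)) x)
            * (2 * (dotp (d1 (symGrad u) (σ 3)) (d1 (symGrad u) (σ 1)) x
                + dotp (ent (symGrad u)) (d2 (symGrad u) (σ 3) (σ 1)) x))
        + deriv (deriv G) (qD (symGrad u) x)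
            * (2 * dotp (ent (symGrad u)) (d1 (symGrad u) (σ 3)) x)
            * (2 * (dotp (d1 (symGrad u) (σ 2)) (d1 (symGrad u) (σ 1)) x
                + dotp (ent (symGrad u)) (d2 (symGrad u) (σ 2) (σ 1)) x))
        + deriv G (qD (symGrad u) x)
            * (2 * (dotp (d2 (symGrad u) (σ 3) (σ 2)) (d1 (symGrad u) (σ 1)) x
                + dotp (d1 (symGrad u) (σ 2)) (d2 (symGrad u) (σ 3) (σ 1)) x
                + dotp (d1 (symGrad u) (σ 3)) (d2 (symGrad u) (σ 2) (σ 1)) x)) := by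
  have hD := cd_symGrad hu
  unfold Eerr
  have h0 : (fun y => G (msq (symGrad u y))) = fun y => G (qD (symGrad u) y) := by
    funext y; rw [qD_eq]
  rw [h0]
  have h1 : pdIter σ 3 (fun y => G (qD (symGrad u) y)) x
      = pd (σ 3) (fun y => pd (σ 2) (fun z => pd (σ 1)
          (fun w => G (qD (symGrad u) w)) z) y) x := rfl
  rw [h1, pd3_comp hD hGs]
  have h2 : mdot (symGrad u x)
        (fun i j => pdIter σ 3 (fun y => symGrad u y i j) x)
      = dotp (ent (symGrad u)) (d3 (symGrad u) (σ 3) (σ 2) (σ 1)) x := by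
    rw [dotp_eq_mdot]; rfl
  rw [h2, qD_eq]
  ring

end eerr

end EerrAux

end Aux4

noncomputable section Aux5

namespace EerrAux

lemma msq_nonneg (A : Mat3) : 0 ≤ msq A := by
  unfold msq mdot
  exact Finset.sum_nonneg fun i _ => Finset.sum_nonneg fun j _ => mul_self_nonneg _

lemma cs_mdot (A B : Mat3) : |mdot A B| ≤ Real.sqrt (msq A) * Real.sqrt (msq B) := by
  have h := Finset.sum_mul_sq_le_sq_mul_sq Finset.univ
    (fun p : Fin 3 × Fin 3 => A p.1 p.2) (fun p : Fin 3 × Fin 3 => B p.1 p.2)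
  have hA : msq A = ∑ p : Fin 3 × Fin 3, (A p.1 p.2)^2 := by
    simp [msq, mdot, Fintype.sum_prod_type, sq]
  have hB : msq B = ∑ p : Fin 3 × Fin 3, (B p.1 p.2)^2 := by
    simp [msq, mdot, Fintype.sum_prod_type, sq]
  have hAB : mdot A B = ∑ p : Fin 3 × Fin 3, A p.1 p.2 * B p.1 p.2 := by
    simp [mdot, Fintype.sum_prod_type]
  calc |mdot A B| = Real.sqrt ((mdot A B)^2) := (Real.sqrt_sq_eq_abs _).symm
    _ ≤ Real.sqrt (msq A * msq B) := by
        apply Real.sqrt_le_sqrt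
        rw [hA, hB, hAB]
        exact h
    _ = Real.sqrt (msq A) * Real.sqrt (msq B) := Real.sqrt_mul (msq_nonneg A) _

lemma sqrt_msq_le {A : Mat3} {b : ℝ} (hb : 0 ≤ b) (h : ∀ i j, |A i j| ≤ b) :
    Real.sqrt (msq A) ≤ 3 * b := by
  have h1 : msq A ≤ 9 * b^2 := by
    have hij : ∀ i j : Fin 3, A i j * A i j ≤ b * b := by
      intro i j
      have := mul_self_le_mul_self (abs_nonneg (A i j)) (h i j)
      rwa [abs_mul_abs_self] at this
    have hle : msq A ≤ ∑ _i : Fin 3, ∑ _j : Fin 3, b * b := by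
      unfold msq mdot
      exact Finset.sum_le_sum fun i _ => Finset.sum_le_sum fun j _ => hij i j
    calc msq A ≤ ∑ _i : Fin 3, ∑ _j : Fin 3, b * b := hle
      _ = 9 * b^2 := by simp [Finset.sum_const]; ring
  calc Real.sqrt (msq A) ≤ Real.sqrt (9 * b^2) := Real.sqrt_le_sqrt h1
    _ = 3 * b := by
        rw [show (9:ℝ) * b^2 = (3*b)^2 by ring, Real.sqrt_sq (by positivity)]

lemma sqrt_le_one_add (s : ℝ) (hs : 0 ≤ s) : Real.sqrt s ≤ 1 + s := by
  nlinarith [Real.sq_sqrt hs, Real.sqrt_nonneg s]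

end EerrAux

end Aux5

noncomputable section Aux5b

namespace EerrAux

lemma tri_bound {g S2 S1 r m b : ℝ} (hr : 0 ≤ r) (hm : 0 ≤ m)
    (h2 : |S2| ≤ r * m) (h1 : |S1| ≤ r * m) (hg : |g| * (r * r) ≤ b) :
    |g * (2 * S2) * (2 * S1)| ≤ 4 * (b * (m * m)) := by
  have e : |g * (2 * S2) * (2 * S1)| = |g| * (2 * |S2|) * (2 * |S1|) := by
    rw [abs_mul, abs_mul, abs_mul, abs_mul, abs_two]
  have p1 : |S2| * |S1| ≤ (r * m) * (r * m) :=
    mul_le_mul h2 h1 (abs_nonneg _) (mul_nonneg hr hm)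
  have q1 : |g| * (|S2| * |S1|) ≤ |g| * ((r * m) * (r * m)) :=
    mul_le_mul_of_nonneg_left p1 (abs_nonneg g)
  have q2 : (|g| * (r * r)) * (m * m) ≤ b * (m * m) :=
    mul_le_mul_of_nonneg_right hg (mul_nonneg hm hm)
  rw [e]; nlinarith [q1, q2]

lemma quad_bound {g S3 S2 S1 r m b : ℝ} (hr : 0 ≤ r) (hm : 0 ≤ m)
    (h3 : |S3| ≤ r * m) (h2 : |S2| ≤ r * m) (h1 : |S1| ≤ r * m)
    (hg : |g| * (r * r * r) ≤ b) :
    |g * (2 * S3) * (2 * S2) * (2 * S1)| ≤ 8 * (b * (m * m * m)) := by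
  have e : |g * (2 * S3) * (2 * S2) * (2 * S1)|
      = |g| * (2 * |S3|) * (2 * |S2|) * (2 * |S1|) := by
    rw [abs_mul, abs_mul, abs_mul, abs_mul, abs_mul, abs_mul, abs_two]
  have p0 : |S3| * |S2| ≤ (r * m) * (r * m) :=
    mul_le_mul h3 h2 (abs_nonneg _) (mul_nonneg hr hm)
  have p1 : (|S3| * |S2|) * |S1| ≤ ((r * m) * (r * m)) * (r * m) :=
    mul_le_mul p0 h1 (abs_nonneg _) (by positivity)
  have q1 : |g| * ((|S3| * |S2|) * |S1|) ≤ |g| * (((r * m) * (r * m)) * (r * m)) :=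
    mul_le_mul_of_nonneg_left p1 (abs_nonneg g)
  have q2 : (|g| * (r * r * r)) * (m * m * m) ≤ b * (m * m * m) :=
    mul_le_mul_of_nonneg_right hg (by positivity)
  rw [e]; nlinarith [q1, q2]

lemma mix_bound {g M U S r m n b1 b2 : ℝ} (hr : 0 ≤ r) (hm : 0 ≤ m) (hn : 0 ≤ n)
    (hM : |M| ≤ m * m) (hU : |U| ≤ r * n) (hS : |S| ≤ r * m)
    (hgr : |g| * r ≤ b1) (hgs : |g| * (r * r) ≤ b2) :
    |g * (2 * (M + U)) * (2 * S)| ≤ 4 * (b1 * (m * m * m)) + 4 * (b2 * (n * m)) := by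
  have e : |g * (2 * (M + U)) * (2 * S)| = |g| * (2 * |M + U|) * (2 * |S|) := by
    rw [abs_mul, abs_mul, abs_mul, abs_mul, abs_two]
  have hMU : |M + U| ≤ m * m + r * n := (abs_add_le M U).trans (add_le_add hM hU)
  have p1 : |M + U| * |S| ≤ (m * m + r * n) * (r * m) :=
    mul_le_mul hMU hS (abs_nonneg _) (by positivity)
  have q1 : |g| * (|M + U| * |S|) ≤ |g| * ((m * m + r * n) * (r * m)) :=
    mul_le_mul_of_nonneg_left p1 (abs_nonneg g)
  have q2 : (|g| * r) * (m * m * m) ≤ b1 * (m * m * m) :=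
    mul_le_mul_of_nonneg_right hgr (by positivity)
  have q3 : (|g| * (r * r)) * (n * m) ≤ b2 * (n * m) :=
    mul_le_mul_of_nonneg_right hgs (by positivity)
  rw [e]; nlinarith [q1, q2, q3]

lemma lin_bound {g V1 V2 V3 n b : ℝ}
    (h1 : |V1| ≤ n) (h2 : |V2| ≤ n) (h3 : |V3| ≤ n) (hg : |g| ≤ b) (hn : 0 ≤ n) :
    |g * (2 * (V1 + V2 + V3))| ≤ 6 * (b * n) := by
  have e : |g * (2 * (V1 + V2 + V3))| = |g| * (2 * |V1 + V2 + V3|) := by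
    rw [abs_mul, abs_mul, abs_two]
  have hV : |V1 + V2 + V3| ≤ 3 * n := by
    calc |V1 + V2 + V3| ≤ |V1 + V2| + |V3| := abs_add_le _ _
      _ ≤ |V1| + |V2| + |V3| := by linarith [abs_add_le V1 V2]
      _ ≤ 3 * n := by linarith
  have := mul_le_mul_of_nonneg_left hV (abs_nonneg g)
  have hb : |g| ≤ b := hg
  rw [e]; nlinarith [mul_le_mul hg hV (abs_nonneg _) ((abs_nonneg g).trans hg)]

lemma pair_bound {g M m b : ℝ} (hm : 0 ≤ m) (hM : |M| ≤ m * m) (hg : |g| ≤ b) :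
    |g * (2 * M)| ≤ 2 * (b * (m * m)) := by
  have e : |g * (2 * M)| = |g| * (2 * |M|) := by rw [abs_mul, abs_mul, abs_two]
  rw [e]
  nlinarith [mul_le_mul hg hM (abs_nonneg _) ((abs_nonneg g).trans hg), abs_nonneg g]

end EerrAux

end Aux5b

noncomputable section Aux5c
namespace EerrAux
lemma mix_bound' {g M U S r m n b1 b2 : ℝ} (hr : 0 ≤ r) (hm : 0 ≤ m) (hn : 0 ≤ n)
    (hM : |M| ≤ m * m) (hU : |U| ≤ r * n) (hS : |S| ≤ r * m)
    (hgr : |g| * r ≤ b1) (hgs : |g| * (r * r) ≤ b2) :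
    |g * (2 * S) * (2 * (M + U))| ≤ 4 * (b1 * (m * m * m)) + 4 * (b2 * (n * m)) := by
  rw [mul_right_comm]
  exact mix_bound hr hm hn hM hU hS hgr hgs
end EerrAux
end Aux5c

set_option maxHeartbeats 1000000 in
open MeasureTheory Set ENNReal in
/-- Lemma `deriv-G`, part (1): pointwise bounds
`|E₂| ≤ C G[|Du|²] |∇Du|²` and `|E₃| ≤ C G[|Du|²](|∇Du|³ + |∇²Du||∇Du|)`,
with `C` depending only on the structural constants of `G`. -/
theorem Eerr_two_three_pointwise_bound
    (G : ℝ → ℝ) (m₀ : ℝ) (C : ℕ → ℝ) (hG : GoodG G m₀ C)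
    (l : ℕ) (u : E3 → E3) (hu : ContDiff ℝ (⊤ : ℕ∞) u) (huH : HNorm l u < ⊤) :
    ∃ C' : ℝ, 0 < C' ∧
      ∀ σ : ℕ → Fin 3, ∀ x : E3,
        |Eerr G u σ 2 x|
            ≤ C' * G (msq (symGrad u x)) * ‖iteratedFDeriv ℝ 1 (symGrad u) x‖ ^ 2 ∧
        |Eerr G u σ 3 x|
            ≤ C' * G (msq (symGrad u x)) *
                (‖iteratedFDeriv ℝ 1 (symGrad u) x‖ ^ 3
                  + ‖iteratedFDeriv ℝ 2 (symGrad u) x‖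
                      * ‖iteratedFDeriv ℝ 1 (symGrad u) x‖) := by
  classical
  obtain ⟨hGs, hm₀, hlow, _hlow', hdb⟩ := hG
  set c1 := |C 1| with hc1def
  set c2 := |C 2| with hc2def
  set c3 := |C 3| with hc3def
  have hc1n : 0 ≤ c1 := abs_nonneg _
  have hc2n : 0 ≤ c2 := abs_nonneg _
  have hc3n : 0 ≤ c3 := abs_nonneg _
  set B := (1 + c1) * (1 + c2) * (1 + c3) with hBdef
  have hmono : ∀ a b c : ℝ, 0 ≤ a → 0 ≤ b → 0 ≤ c →
      (1 ≤ (1+a)*(1+b)*(1+c)) ∧ (a ≤ (1+a)*(1+b)*(1+c)) ∧ (b*a ≤ (1+a)*(1+b)*(1+c)) ∧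
        (c*(b*a) ≤ (1+a)*(1+b)*(1+c)) := by
    intro a b c ha hb hc
    have p1 : 0 ≤ a*b := mul_nonneg ha hb
    have p2 : 0 ≤ b*c := mul_nonneg hb hc
    have p3 : 0 ≤ a*c := mul_nonneg ha hc
    have p4 : 0 ≤ a*b*c := mul_nonneg p1 hc
    refine ⟨?_, ?_, ?_, ?_⟩ <;> nlinarith [p1, p2, p3, p4]
  have hB1 : 1 ≤ B := by rw [hBdef]; exact (hmono c1 c2 c3 hc1n hc2n hc3n).1
  have hBc1 : c1 ≤ B := by rw [hBdef]; exact (hmono c1 c2 c3 hc1n hc2n hc3n).2.1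
  have hBc12 : c2 * c1 ≤ B := by rw [hBdef]; exact (hmono c1 c2 c3 hc1n hc2n hc3n).2.2.1
  have hBc123 : c3 * (c2 * c1) ≤ B := by rw [hBdef]; exact (hmono c1 c2 c3 hc1n hc2n hc3n).2.2.2
  have hB0 : (0:ℝ) ≤ B := zero_le_one.trans hB1
  refine ⟨1 + 2000 * B, by nlinarith, fun σ x => ?_⟩
  have hD : ContDiff ℝ (⊤ : ℕ∞) (symGrad u) := EerrAux.cd_symGrad hu
  set D := symGrad u with hDdef
  set s := msq (D x) with hsdef
  have hs0 : 0 ≤ s := EerrAux.msq_nonneg _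
  have hGpos : 0 < G s := lt_of_lt_of_le hm₀ (hlow s hs0)
  set cG := G s with hcGdef
  have hcGn : 0 ≤ cG := hGpos.le
  set r := Real.sqrt s with hrdef
  have hr0 : 0 ≤ r := Real.sqrt_nonneg _
  have hrr : r * r = s := Real.mul_self_sqrt hs0
  have hr1 : r ≤ 1 + s := EerrAux.sqrt_le_one_add s hs0
  -- scalar derivative bounds
  have e0 : iteratedDeriv 0 G = G := iteratedDeriv_zero
  have e1 : iteratedDeriv 1 G = deriv G := iteratedDeriv_one
  have e2 : iteratedDeriv 2 G = deriv (deriv G) := by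
    rw [iteratedDeriv_succ, e1]
  have e3 : iteratedDeriv 3 G = deriv (deriv (deriv G)) := by
    rw [iteratedDeriv_succ, e2]
  have hg1 : |deriv G s| ≤ c1 * cG := by
    have h := hdb 1 le_rfl s hs0 0 (by norm_num)
    simp only [pow_zero, mul_one, e1, e0] at h
    calc |deriv G s| ≤ C 1 * |G s| := h
      _ ≤ c1 * cG := by
          rw [abs_of_pos hGpos]
          exact mul_le_mul_of_nonneg_right (le_abs_self _) hGpos.le
  have hg2 : |deriv (deriv G) s| ≤ c2 * |deriv G s| := by
    have h := hdb 2 (by norm_num) s hs0 0 (by norm_num)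
    simp only [pow_zero, mul_one] at h
    rw [show (2:ℕ) - 1 = 1 from rfl, e1, e2] at h
    exact h.trans (mul_le_mul_of_nonneg_right (le_abs_self _) (abs_nonneg _))
  have hg2s : |deriv (deriv G) s| * s ≤ c2 * |deriv G s| := by
    have h := hdb 2 (by norm_num) s hs0 1 le_rfl
    simp only [pow_one] at h
    rw [show (2:ℕ) - 1 = 1 from rfl, e1, e2, abs_mul, abs_of_nonneg hs0] at h
    exact h.trans (mul_le_mul_of_nonneg_right (le_abs_self _) (abs_nonneg _))
  have hg3s : |deriv (deriv (deriv G)) s| * s ≤ c3 * |deriv (deriv G) s| := by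
    have h := hdb 3 (by norm_num) s hs0 1 le_rfl
    simp only [pow_one] at h
    rw [show (3:ℕ) - 1 = 2 from rfl, e2, e3, abs_mul, abs_of_nonneg hs0] at h
    exact h.trans (mul_le_mul_of_nonneg_right (le_abs_self _) (abs_nonneg _))
  -- combined scalar bounds
  have hBc1G : c1 * cG ≤ B * cG := mul_le_mul_of_nonneg_right hBc1 hcGn
  have hBc12G : (c2 * c1) * cG ≤ B * cG := mul_le_mul_of_nonneg_right hBc12 hcGn
  have hBc123G : (c3 * (c2 * c1)) * cG ≤ B * cG := mul_le_mul_of_nonneg_right hBc123 hcGn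
  have hc2g1 : c2 * |deriv G s| ≤ c2 * (c1 * cG) := mul_le_mul_of_nonneg_left hg1 hc2n
  have hA0 : |deriv G s| ≤ B * cG := hg1.trans hBc1G
  have hA1 : |deriv (deriv G) s| * (r * r) ≤ B * cG := by
    rw [hrr]; nlinarith [hg2s, hc2g1, hBc12G]
  have hA2 : |deriv (deriv G) s| * r ≤ 2 * B * cG := by
    have h := mul_le_mul_of_nonneg_left hr1 (abs_nonneg (deriv (deriv G) s))
    nlinarith [hg2, hg2s, hc2g1, hBc12G]
  have hA3 : |deriv (deriv (deriv G)) s| * (r * r * r) ≤ 2 * B * cG := by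
    have h3 : |deriv (deriv (deriv G)) s| * s * r ≤ c3 * |deriv (deriv G) s| * r :=
      mul_le_mul_of_nonneg_right hg3s hr0
    have h4 : |deriv (deriv G) s| * r ≤ 2 * (c2 * |deriv G s|) := by
      have h := mul_le_mul_of_nonneg_left hr1 (abs_nonneg (deriv (deriv G) s))
      nlinarith
    have h5 : c3 * (|deriv (deriv G) s| * r) ≤ c3 * (2 * (c2 * |deriv G s|)) :=
      mul_le_mul_of_nonneg_left h4 hc3n
    have h6 : c3 * (c2 * |deriv G s|) ≤ c3 * (c2 * (c1 * cG)) :=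
      mul_le_mul_of_nonneg_left (mul_le_mul_of_nonneg_left hg1 hc2n) hc3n
    have e : |deriv (deriv (deriv G)) s| * (r * r * r)
        = |deriv (deriv (deriv G)) s| * s * r := by rw [← hrr]; ring
    have h7 : c3 * (c2 * (c1 * cG)) ≤ B * cG := by nlinarith [hBc123G]
    rw [e]
    nlinarith [h3, h5, h6, h7, mul_nonneg hc3n (mul_nonneg hc2n (abs_nonneg (deriv G s)))]
  -- matrix bounds
  set N1 := ‖iteratedFDeriv ℝ 1 D x‖ with hN1def
  set N2 := ‖iteratedFDeriv ℝ 2 D x‖ with hN2def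
  have hN1n : 0 ≤ N1 := norm_nonneg _
  have hN2n : 0 ≤ N2 := norm_nonneg _
  have hsq_ent : Real.sqrt (msq (fun i j => EerrAux.ent D i j x)) = r := by
    rw [hrdef, hsdef]
    rfl
  have hsq_d1 : ∀ k, Real.sqrt (msq (fun i j => EerrAux.d1 D k i j x)) ≤ 3 * N1 :=
    fun k => EerrAux.sqrt_msq_le hN1n (fun i j => EerrAux.abs_pd_entry_le hD i j k x)
  have hsq_d2 : ∀ k l, Real.sqrt (msq (fun i j => EerrAux.d2 D k l i j x)) ≤ 3 * N2 :=
    fun k l => EerrAux.sqrt_msq_le hN2n (fun i j => EerrAux.abs_pd_pd_entry_le hD i j k l x)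
  have hS : ∀ k, |EerrAux.dotp (EerrAux.ent D) (EerrAux.d1 D k) x| ≤ r * (3 * N1) := by
    intro k
    rw [EerrAux.dotp_eq_mdot]
    refine (EerrAux.cs_mdot _ _).trans ?_
    rw [hsq_ent]
    exact mul_le_mul_of_nonneg_left (hsq_d1 k) hr0
  have hM : ∀ k l, |EerrAux.dotp (EerrAux.d1 D k) (EerrAux.d1 D l) x|
      ≤ (3 * N1) * (3 * N1) := by
    intro k l
    rw [EerrAux.dotp_eq_mdot]
    exact (EerrAux.cs_mdot _ _).trans
      (mul_le_mul (hsq_d1 k) (hsq_d1 l) (Real.sqrt_nonneg _) (by positivity))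
  have hU : ∀ k l, |EerrAux.dotp (EerrAux.ent D) (EerrAux.d2 D k l) x| ≤ r * (3 * N2) := by
    intro k l
    rw [EerrAux.dotp_eq_mdot]
    refine (EerrAux.cs_mdot _ _).trans ?_
    rw [hsq_ent]
    exact mul_le_mul_of_nonneg_left (hsq_d2 k l) hr0
  have hV : ∀ a b c, |EerrAux.dotp (EerrAux.d2 D a b) (EerrAux.d1 D c) x|
      ≤ (3 * N2) * (3 * N1) := by
    intro a b c
    rw [EerrAux.dotp_eq_mdot]
    exact (EerrAux.cs_mdot _ _).trans
      (mul_le_mul (hsq_d2 a b) (hsq_d1 c) (Real.sqrt_nonneg _) (by positivity))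
  have hV' : ∀ a b c, |EerrAux.dotp (EerrAux.d1 D c) (EerrAux.d2 D a b) x|
      ≤ (3 * N2) * (3 * N1) := by
    intro a b c
    rw [EerrAux.dotp_eq_mdot]
    refine (EerrAux.cs_mdot _ _).trans ?_
    rw [mul_comm]
    exact mul_le_mul (hsq_d2 a b) (hsq_d1 c) (Real.sqrt_nonneg _) (by positivity)
  have hq : EerrAux.qD D x = s := EerrAux.qD_eq D x
  constructor
  · -- E₂
    rw [EerrAux.Eerr2_eq hu hGs σ x]
    rw [show (symGrad u) = D from rfl, hq]
    have b1 := EerrAux.tri_bound (b := B * cG) hr0 (by positivity : (0:ℝ) ≤ 3 * N1)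
      (hS (σ 2)) (hS (σ 1)) hA1
    have b2 := EerrAux.pair_bound (m := 3 * N1) (by positivity) (hM (σ 2) (σ 1)) hA0
    refine le_trans ((abs_add_le _ _).trans (add_le_add b1 b2)) ?_
    nlinarith [mul_nonneg hcGn (mul_nonneg hN1n hN1n),
      mul_nonneg (mul_nonneg hB0 hcGn) (mul_nonneg hN1n hN1n)]
  · -- E₃
    rw [EerrAux.Eerr3_eq hu hGs σ x]
    rw [show (symGrad u) = D from rfl, hq]
    have t1 := EerrAux.quad_bound (b := 2 * B * cG) hr0
      (by positivity : (0:ℝ) ≤ 3 * N1) (hS (σ 3)) (hS (σ 2)) (hS (σ 1)) hA3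
    have t2 := EerrAux.mix_bound (b1 := 2 * B * cG) (b2 := B * cG) hr0
      (by positivity : (0:ℝ) ≤ 3 * N1) (by positivity : (0:ℝ) ≤ 3 * N2)
      (hM (σ 3) (σ 2)) (hU (σ 3) (σ 2)) (hS (σ 1)) hA2 hA1
    have t3 := EerrAux.mix_bound' (b1 := 2 * B * cG) (b2 := B * cG) hr0
      (by positivity : (0:ℝ) ≤ 3 * N1) (by positivity : (0:ℝ) ≤ 3 * N2)
      (hM (σ 3) (σ 1)) (hU (σ 3) (σ 1)) (hS (σ 2)) hA2 hA1
    have t4 := EerrAux.mix_bound' (b1 := 2 * B * cG) (b2 := B * cG) hr0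
      (by positivity : (0:ℝ) ≤ 3 * N1) (by positivity : (0:ℝ) ≤ 3 * N2)
      (hM (σ 2) (σ 1)) (hU (σ 2) (σ 1)) (hS (σ 3)) hA2 hA1
    have t5 := EerrAux.lin_bound (b := B * cG) (hV (σ 3) (σ 2) (σ 1))
      (hV' (σ 3) (σ 1) (σ 2)) (hV' (σ 2) (σ 1) (σ 3)) hA0
      (by positivity : (0:ℝ) ≤ (3 * N2) * (3 * N1))
    refine le_trans (abs_add_le _ _) ?_
    refine le_trans (add_le_add_left (abs_add_le _ _) _) ?_
    refine le_trans (add_le_add_left (add_le_add_left (abs_add_le _ _) _) _) ?_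
    refine le_trans (add_le_add_left (add_le_add_left (add_le_add_left (abs_add_le _ _) _) _) _) ?_
    refine le_trans (add_le_add (add_le_add (add_le_add (add_le_add t1 t2) t3) t4) t5) ?_
    nlinarith [mul_nonneg (mul_nonneg hB0 hcGn) (mul_nonneg (mul_nonneg hN1n hN1n) hN1n),
      mul_nonneg (mul_nonneg hB0 hcGn) (mul_nonneg hN2n hN1n),
      mul_nonneg hcGn (mul_nonneg (mul_nonneg hN1n hN1n) hN1n),
      mul_nonneg hcGn (mul_nonneg hN2n hN1n)]
end

section
/- Let v, w ∈ W^{1,2}(ℝ³;ℝ³) and let G:[0,∞)→[0,∞) be differentiable with G[s] ≥ m₀ and G[s] + 2G'[s]s ≥ m₀ for all s ≥ 0, where m₀ > 0. Then m₀ ‖Dv − Dw‖²_{L²(ℝ³)} ≤ ∫_{ℝ³} ( G[|Dv|²] Dv − G[|Dw|²] Dw ) : (Dv − Dw) dx. -/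
open MeasureTheory Set ENNReal

open MeasureTheory Set ENNReal in
lemma msq_nonneg (A : Mat3) : 0 ≤ msq A := by
  unfold msq mdot
  exact Finset.sum_nonneg fun i _ => Finset.sum_nonneg fun j _ => mul_self_nonneg _

lemma mdot_sq_le (A B : Mat3) : (mdot A B) ^ 2 ≤ msq A * msq B := by
  have e : ∀ X Y : Mat3, mdot X Y = ∑ p : Fin 3 × Fin 3, X p.1 p.2 * Y p.1 p.2 := by
    intro X Y; unfold mdot
    exact (Fintype.sum_prod_type (f := fun p : Fin 3 × Fin 3 => X p.1 p.2 * Y p.1 p.2)).symm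
  unfold msq
  rw [e A B, e A A, e B B]
  have := Finset.sum_mul_sq_le_sq_mul_sq Finset.univ
    (fun p : Fin 3 × Fin 3 => A p.1 p.2) (fun p : Fin 3 × Fin 3 => B p.1 p.2)
  simpa [sq] using this

lemma key_pointwise (G : ℝ → ℝ) (m₀ : ℝ) (hGdiff : Differentiable ℝ G)
    (hG1 : ∀ s : ℝ, 0 ≤ s → m₀ ≤ G s)
    (hG2 : ∀ s : ℝ, 0 ≤ s → m₀ ≤ G s + 2 * deriv G s * s)
    (A B : Mat3) :
    m₀ * msq (A - B) ≤
      mdot ((fun i j => G (msq A) * A i j) - fun i j => G (msq B) * B i j) (A - B) := by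
  set D : Mat3 := A - B with hD
  set M : ℝ → Mat3 := fun t => fun i j => B i j + t * D i j with hM
  have entry : ∀ (t : ℝ) (i j : Fin 3), HasDerivAt (fun s => M s i j) (D i j) t := by
    intro t i j
    simpa [hM] using ((hasDerivAt_id t).mul_const (D i j)).const_add (B i j)
  set q : ℝ → ℝ := fun t => msq (M t) with hq
  set r : ℝ → ℝ := fun t => mdot (M t) D with hr
  set h : ℝ → ℝ := fun t => G (q t) * r t with hh
  have hq' : ∀ t : ℝ, HasDerivAt q (2 * mdot (M t) D) t := by
    intro t
    have h1 : HasDerivAt q (∑ i, ∑ j, (D i j * M t i j + M t i j * D i j)) t := by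
      rw [hq]; unfold msq mdot
      apply HasDerivAt.fun_sum; intro i _
      apply HasDerivAt.fun_sum; intro j _
      exact (entry t i j).mul (entry t i j)
    convert h1 using 1
    unfold mdot
    rw [Finset.mul_sum]
    refine Finset.sum_congr rfl fun i _ => ?_
    rw [Finset.mul_sum]
    exact Finset.sum_congr rfl fun j _ => by ring
  have hr' : ∀ t : ℝ, HasDerivAt r (mdot D D) t := by
    intro t
    rw [hr]; unfold mdot
    apply HasDerivAt.fun_sum; intro i _
    apply HasDerivAt.fun_sum; intro j _
    simpa using (entry t i j).mul_const (D i j)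
  have hh' : ∀ t : ℝ, HasDerivAt h
      (deriv G (q t) * (2 * mdot (M t) D) * r t + G (q t) * mdot D D) t := by
    intro t
    exact (((hGdiff (q t)).hasDerivAt.comp t (hq' t)).mul (hr' t))
  -- lower bound for the derivative at any t
  have hlow : ∀ t : ℝ,
      m₀ * msq D ≤ deriv G (q t) * (2 * mdot (M t) D) * r t + G (q t) * mdot D D := by
    intro t
    set s := q t with hs
    have hs0 : 0 ≤ s := msq_nonneg _
    have hp : (mdot (M t) D) ^ 2 ≤ s * msq D := mdot_sq_le (M t) D
    have hrdef : r t = mdot (M t) D := rfl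
    rw [hrdef]
    have hDD : mdot D D = msq D := rfl
    rw [hDD]
    rcases le_or_gt 0 (deriv G s) with hpos | hneg
    · have h1 : 0 ≤ deriv G s * (2 * mdot (M t) D) * mdot (M t) D := by
        have : deriv G s * (2 * mdot (M t) D) * mdot (M t) D
            = 2 * deriv G s * (mdot (M t) D) ^ 2 := by ring
        rw [this]
        positivity
      nlinarith [hG1 s hs0, msq_nonneg D]
    · have h1 : 2 * deriv G s * (s * msq D) ≤ 2 * deriv G s * (mdot (M t) D) ^ 2 := by
        apply mul_le_mul_of_nonpos_left hp (by linarith)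
      have h2 := hG2 s hs0
      nlinarith [msq_nonneg D]
  -- mean value theorem on [0,1]
  have hcont : ContinuousOn h (Icc 0 1) := fun t _ => ((hh' t).continuousAt).continuousWithinAt
  obtain ⟨c, _, hc⟩ := exists_hasDerivAt_eq_slope h
    (fun t => deriv G (q t) * (2 * mdot (M t) D) * r t + G (q t) * mdot D D)
    (by norm_num) hcont (fun t _ => hh' t)
  have h10 : h 1 - h 0 =
      mdot ((fun i j => G (msq A) * A i j) - fun i j => G (msq B) * B i j) D := by
    have hM1 : M 1 = A := by funext i j; simp [hM, hD]
    have hM0 : M 0 = B := by funext i j; simp [hM]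
    simp only [hh, hq, hr, hM1, hM0]
    unfold mdot
    rw [Finset.mul_sum, Finset.mul_sum, ← Finset.sum_sub_distrib]
    refine Finset.sum_congr rfl fun i _ => ?_
    rw [Finset.mul_sum, Finset.mul_sum, ← Finset.sum_sub_distrib]
    refine Finset.sum_congr rfl fun j _ => ?_
    simp [Pi.sub_apply]; ring
  have := hlow c
  rw [hc] at this
  simp only [div_one, sub_zero] at this
  linarith [h10 ▸ this]

/-- Lemma `r-400`: monotonicity of the stress tensor, i.e.
`m₀‖Dv−Dw‖²_{L²} ≤ ∫ (G[|Dv|²]Dv − G[|Dw|²]Dw) : (Dv−Dw)` for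
`v, w ∈ W^{1,2}(ℝ³)`. -/
theorem stress_monotonicity
    (G : ℝ → ℝ) (m₀ : ℝ) (hm : 0 < m₀)
    (hGdiff : Differentiable ℝ G)
    (hG1 : ∀ s : ℝ, 0 ≤ s → m₀ ≤ G s)
    (hG2 : ∀ s : ℝ, 0 ≤ s → m₀ ≤ G s + 2 * deriv G s * s)
    (v w : E3 → E3)
    (hv : ContDiff ℝ 1 v) (hw : ContDiff ℝ 1 w)
    (hvH : HNorm 1 v < ⊤) (hwH : HNorm 1 w < ⊤) :
    ENNReal.ofReal m₀ * ∫⁻ x, ENNReal.ofReal (msq (symGrad v x - symGrad w x))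
      ≤ ∫⁻ x, ENNReal.ofReal
          (mdot (stress G v x - stress G w x) (symGrad v x - symGrad w x)) := by
  have hkey : ∀ x : E3,
      m₀ * msq (symGrad v x - symGrad w x) ≤
        mdot (stress G v x - stress G w x) (symGrad v x - symGrad w x) := fun x =>
     key_pointwise G m₀ hGdiff hG1 hG2 (symGrad v x) (symGrad w x)
  rw [← lintegral_const_mul' _ _ (by simp : ENNReal.ofReal m₀ ≠ ⊤)]
  refine lintegral_mono fun x => ?_
  rw [← ENNReal.ofReal_mul hm.le]
  exact ENNReal.ofReal_le_ofReal (hkey x)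
end

section
/- Let G:[0,∞)→[0,∞) be differentiable with G[s] ≥ m₀ and G[s] + 2G'[s]s ≥ m₀ for all s ≥ 0, where m₀ > 0. Then for any real 3×3 matrices A and B: G[|A|²] |B|² + 2 G'[|A|²] (A:B)² ≥ m₀ |B|². -/
open MeasureTheory Set ENNReal

open MeasureTheory Set ENNReal in
/-- inequality `eq-1 : G`: for any 3×3 matrices `A`, `B`,
`G[|A|²]|B|² + 2G'[|A|²](A:B)² ≥ m₀|B|²`. -/
theorem matrix_coercivity
    (G : ℝ → ℝ) (m₀ : ℝ) (hm : 0 < m₀)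
    (hGdiff : Differentiable ℝ G)
    (hG1 : ∀ s : ℝ, 0 ≤ s → m₀ ≤ G s)
    (hG2 : ∀ s : ℝ, 0 ≤ s → m₀ ≤ G s + 2 * deriv G s * s)
    (A B : Mat3) :
    m₀ * msq B ≤ G (msq A) * msq B + 2 * deriv G (msq A) * (mdot A B) ^ 2 := by
  have hCS : (mdot A B)^2 ≤ msq A * msq B := by
    have h := real_inner_mul_inner_self_le
      (F := EuclideanSpace ℝ (Fin 3 × Fin 3))
      (WithLp.toLp 2 (fun p : Fin 3 × Fin 3 => A p.1 p.2)) (WithLp.toLp 2 (fun p : Fin 3 × Fin 3 => B p.1 p.2))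
    simp only [PiLp.inner_apply, RCLike.inner_apply, conj_trivial] at h
    rw [sq, mdot, msq, msq, mdot, mdot]
    simpa [Fintype.sum_prod_type, mul_comm (B _ _)] using h
  have hsq : ∀ M : Mat3, 0 ≤ msq M := by
    intro M
    unfold msq mdot
    exact Finset.sum_nonneg fun i _ => Finset.sum_nonneg fun j _ => mul_self_nonneg _
  have hA := hsq A
  have hB := hsq B
  have h1 := hG1 (msq A) hA
  have h2 := hG2 (msq A) hA
  rcases le_or_gt 0 (deriv G (msq A)) with h | h
  · nlinarith [sq_nonneg (mdot A B)]
  · nlinarith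
end

section
/- Let α ∈ (0, 1/2] and T > 0. Suppose v : ℝ³ × [0,T] → ℝ satisfies v ∈ L^∞([0,T]; C^α(ℝ³)) (i.e., the spatial Hölder seminorm and sup norm of v(·,t) are bounded uniformly in t ∈ [0,T]) and its time derivative satisfies ∂_t v ∈ L^∞([0,T]; L²(ℝ³)). Then v ∈ C_x^α C_t^{α/2}(ℝ³ × [0,T]); in particular there is a constant C such that |v(x,t₁) − v(x,t₂)| ≤ C |t₁ − t₂|^{α/2} for all x ∈ ℝ³ and t₁, t₂ ∈ [0,T]. -/
open MeasureTheory Set ENNReal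

section HolderHelpers
open MeasureTheory Set ENNReal Filter Topology

private lemma real_le_of_forall_pos {a b : ℝ} (h : ∀ ε : ℝ, 0 < ε → a ≤ b + ε) : a ≤ b := by
  by_contra hc
  push_neg at hc
  have := h ((a - b)/2) (by linarith)
  linarith

private lemma tendsto_mul_rpow_zero {X : Type*} {l : Filter X} {M a : ℝ} (ha : 0 < a)
    {f : X → ℝ} (hf : Filter.Tendsto f l (𝓝 0)) :
    Filter.Tendsto (fun x => M * f x ^ a) l (𝓝 0) := by
  have h2 : ContinuousAt (fun t : ℝ => M * t ^ a) 0 :=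
    ContinuousAt.mul continuousAt_const (Real.continuousAt_rpow_const 0 a (Or.inr ha.le))
  have := h2.tendsto.comp hf
  simpa [Function.comp_def, Real.zero_rpow ha.ne'] using this

private lemma cont_of_holder {f : E3 → ℝ} {M a : ℝ} (ha : 0 < a)
    (h : ∀ x y : E3, |f x - f y| ≤ M * ‖x - y‖ ^ a) : Continuous f := by
  rw [continuous_iff_continuousAt]
  intro x
  rw [ContinuousAt, tendsto_iff_dist_tendsto_zero]
  apply squeeze_zero (g := fun y => M * ‖y - x‖ ^ a) (fun y => dist_nonneg)
    (fun y => by rw [Real.dist_eq]; exact h y x)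
  apply tendsto_mul_rpow_zero ha
  have := ((continuous_id.sub (continuous_const (y := x))).norm).tendsto x
  simpa using this

private lemma exists_meas_ext
    (α : ℝ) (hα0 : 0 < α) (T : ℝ) (hT : 0 < T)
    (v vt : ℝ → E3 → ℝ)
    (hderiv : ∀ x : E3, ∀ t ∈ Icc (0:ℝ) T, HasDerivAt (fun s => v s x) (vt t x) t)
    (M : ℝ)
    (hsp : ∀ t ∈ Icc (0:ℝ) T, ∀ x y : E3, |v t x - v t y| ≤ M * ‖x - y‖ ^ α) :
    ∃ g : ℝ × E3 → ℝ, Measurable g ∧ ∀ s ∈ Ioo (0:ℝ) T, ∀ y, g (s, y) = vt s y := by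
  classical
  set cl : ℝ → ℝ := fun s => min (max s 0) T with hcldef
  have hclmem : ∀ s, cl s ∈ Icc (0:ℝ) T :=
    fun s => ⟨le_min (le_max_right s 0) hT.le, min_le_right _ _⟩
  have hcl_cont : Continuous cl := (continuous_id.max continuous_const).min continuous_const
  have hcl_id : ∀ s ∈ Icc (0:ℝ) T, cl s = s := by
    intro s hs
    simp only [hcldef]
    rw [max_eq_left hs.1, min_eq_left hs.2]
  set u : ℝ × E3 → ℝ := fun p => v (cl p.1) p.2 with hudef
  have hu : Continuous u := by
    rw [continuous_iff_continuousAt]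
    rintro ⟨s₀, y₀⟩
    have hw : ContinuousAt (fun s : ℝ => v (cl s) y₀) s₀ :=
      ((hderiv y₀ (cl s₀) (hclmem s₀)).continuousAt).comp hcl_cont.continuousAt
    rw [ContinuousAt, tendsto_iff_dist_tendsto_zero]
    apply squeeze_zero'
      (g := fun p : ℝ × E3 => M * ‖p.2 - y₀‖ ^ α + dist (v (cl p.1) y₀) (v (cl s₀) y₀))
      (Eventually.of_forall fun p => dist_nonneg)
    · apply Eventually.of_forall
      intro p
      have tri : dist (u p) (u (s₀, y₀)) ≤
          dist (v (cl p.1) p.2) (v (cl p.1) y₀) + dist (v (cl p.1) y₀) (v (cl s₀) y₀) :=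
        dist_triangle _ _ _
      have h2 : dist (v (cl p.1) p.2) (v (cl p.1) y₀) ≤ M * ‖p.2 - y₀‖ ^ α := by
        rw [Real.dist_eq]; exact hsp _ (hclmem p.1) _ _
      calc dist (u p) (u (s₀, y₀)) ≤ _ + _ := tri
        _ ≤ M * ‖p.2 - y₀‖ ^ α + dist (v (cl p.1) y₀) (v (cl s₀) y₀) := by
            exact add_le_add_left h2 _
    · have hA : Tendsto (fun p : ℝ × E3 => M * ‖p.2 - y₀‖ ^ α) (𝓝 (s₀, y₀)) (𝓝 0) := by
        apply tendsto_mul_rpow_zero hα0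
        have : Continuous (fun p : ℝ × E3 => ‖p.2 - y₀‖) :=
          (continuous_snd.sub continuous_const).norm
        simpa using this.tendsto (s₀, y₀)
      have hB : Tendsto (fun p : ℝ × E3 => dist (v (cl p.1) y₀) (v (cl s₀) y₀))
          (𝓝 (s₀, y₀)) (𝓝 0) := by
        have h1 : Tendsto (fun p : ℝ × E3 => v (cl p.1) y₀) (𝓝 (s₀, y₀)) (𝓝 (v (cl s₀) y₀)) :=
          hw.tendsto.comp (continuous_fst.tendsto (s₀, y₀))
        exact tendsto_iff_dist_tendsto_zero.mp h1
      simpa using hA.add hB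
  set f : ℕ → ℝ × E3 → ℝ := fun n p =>
    if p.1 ∈ Ioo (0:ℝ) T then
      ((n:ℝ)+1) * (u (p.1 + ((n:ℝ)+1)⁻¹, p.2) - u p) else 0 with hfdef
  set g : ℝ × E3 → ℝ := fun p => if p.1 ∈ Ioo (0:ℝ) T then vt p.1 p.2 else 0 with hgdef
  have hmeasset : MeasurableSet {p : ℝ × E3 | p.1 ∈ Ioo (0:ℝ) T} :=
    measurable_fst measurableSet_Ioo
  have hfm : ∀ n, Measurable (f n) := by
    intro n
    apply Measurable.ite hmeasset _ measurable_const
    have hcomp : Continuous (fun p : ℝ × E3 => u (p.1 + ((n:ℝ)+1)⁻¹, p.2)) :=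
      hu.comp ((continuous_fst.add continuous_const).prodMk continuous_snd)
    exact (measurable_const.mul ((hcomp.sub hu).measurable))
  have hinv : Tendsto (fun n : ℕ => ((n:ℝ)+1)⁻¹) atTop (𝓝 0) := by
    exact Tendsto.congr (fun n => one_div _) tendsto_one_div_add_atTop_nhds_zero_nat
  have hlim : ∀ p : ℝ × E3, Tendsto (fun n => f n p) atTop (𝓝 (g p)) := by
    rintro ⟨s, y⟩
    by_cases hs : s ∈ Ioo (0:ℝ) T
    · have hD : HasDerivAt (fun t => v t y) (vt s y) s :=
        hderiv y s (Ioo_subset_Icc_self hs)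
      have hslope := hasDerivAt_iff_tendsto_slope.mp hD
      have hz : Tendsto (fun n : ℕ => s + ((n:ℝ)+1)⁻¹) atTop (𝓝[≠] s) := by
        apply tendsto_nhdsWithin_of_tendsto_nhds_of_eventually_within
        · simpa using tendsto_const_nhds.add hinv
        · apply Eventually.of_forall
          intro n
          have : (0:ℝ) < ((n:ℝ)+1)⁻¹ := by positivity
          simp only [Set.mem_compl_iff, Set.mem_singleton_iff]
          intro hcon
          nlinarith [hcon]
      have htt := hslope.comp hz
      have hev : ∀ᶠ n in atTop, ((fun z => slope (fun t => v t y) s z) ∘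
          (fun n : ℕ => s + ((n:ℝ)+1)⁻¹)) n = f n (s, y) := by
        have hsmall : ∀ᶠ n : ℕ in atTop, ((n:ℝ)+1)⁻¹ < T - s :=
          hinv.eventually (gt_mem_nhds (by linarith [hs.2] : (0:ℝ) < T - s))
        filter_upwards [hsmall] with n hn
        have hpos : (0:ℝ) < ((n:ℝ)+1)⁻¹ := by positivity
        have hmem : s + ((n:ℝ)+1)⁻¹ ∈ Icc (0:ℝ) T := ⟨by linarith [hs.1], by linarith⟩
        have hsm : s ∈ Icc (0:ℝ) T := Ioo_subset_Icc_self hs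
        simp only [Function.comp_apply, hfdef, if_pos hs]
        rw [slope_def_field]
        rw [hudef]
        simp only
        rw [hcl_id _ hmem, hcl_id _ hsm]
        have hc : s + ((n:ℝ)+1)⁻¹ - s = ((n:ℝ)+1)⁻¹ := by ring
        rw [hc]
        field_simp
      have := htt.congr' hev
      simp only [hgdef]
      rw [if_pos hs]
      exact this
    · simp only [hfdef, hgdef, if_neg hs]
      exact tendsto_const_nhds
  refine ⟨g, measurable_of_tendsto_metrizable hfm (tendsto_pi_nhds.mpr hlim), ?_⟩
  intro s hs y
  simp only [hgdef]
  rw [if_pos hs]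

private lemma core_est
    (α : ℝ) (hα0 : 0 < α) (T : ℝ) (hT : 0 < T)
    (v vt : ℝ → E3 → ℝ)
    (hderiv : ∀ x : E3, ∀ t ∈ Icc (0:ℝ) T, HasDerivAt (fun s => v s x) (vt t x) t)
    (M : ℝ) (hM : 0 ≤ M)
    (hsp : ∀ t ∈ Icc (0:ℝ) T, ∀ x y : E3, |v t x - v t y| ≤ M * ‖x - y‖ ^ α)
    (K : ℝ) (hK : 0 ≤ K)
    (htime : ∀ t ∈ Icc (0:ℝ) T, eLpNorm (vt t) 2 volume ≤ ENNReal.ofReal K)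
    (x : E3) {t₁ t₂ : ℝ} (h1 : t₁ ∈ Icc (0:ℝ) T) (h2 : t₂ ∈ Icc (0:ℝ) T) (hlt : t₁ < t₂)
    {r : ℝ} (hr : 0 < r) :
    |v t₁ x - v t₂ x| ≤
      2 * (M * r ^ α) + K * (t₂ - t₁) * ((2*r)^3 : ℝ) ^ (-(1/2) : ℝ) := by
  classical
  obtain ⟨g, hgm, hg⟩ := exists_meas_ext α hα0 T hT v vt hderiv M hsp
  set B := Metric.ball x r with hBdef
  have hBm : MeasurableSet B := measurableSet_ball
  set w : ℝ := (2*r)^3 with hwdef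
  have hw : 0 < w := by positivity
  have hV : volume B = ENNReal.ofReal w := by
    rw [hBdef, Real.volume_pi_ball x hr]
    norm_num
    rfl
  have hsub : Ioo t₁ t₂ ⊆ Ioo (0:ℝ) T := Ioo_subset_Ioo h1.1 h2.2
  set F : E3 → ℝ≥0∞ := fun y => ∫⁻ s in Ioo t₁ t₂, (‖g (s, y)‖₊ : ℝ≥0∞) with hFdef
  have hgm2 : Measurable (Function.uncurry fun (y : E3) (s : ℝ) => (‖g (s, y)‖₊ : ℝ≥0∞)) := by
    apply Measurable.coe_nnreal_ennreal
    apply Measurable.nnnorm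
    exact hgm.comp measurable_swap
  have hFm : Measurable F := hgm2.lintegral_prod_right
  -- per-time-slice Cauchy–Schwarz bound
  have hslice : ∀ s ∈ Ioo t₁ t₂,
      (∫⁻ y in B, (‖g (s, y)‖₊ : ℝ≥0∞)) ≤ ENNReal.ofReal K * (volume B) ^ (1/2 : ℝ) := by
    intro s hs
    have hsT : s ∈ Icc (0:ℝ) T := ⟨(hsub hs).1.le, (hsub hs).2.le⟩
    have heq : ∀ y, g (s, y) = vt s y := fun y => hg s (hsub hs) y
    have hmeas : Measurable fun y => g (s, y) := hgm.comp measurable_prodMk_left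
    have hCS := ENNReal.lintegral_mul_le_Lp_mul_Lq (volume.restrict B)
      Real.HolderConjugate.two_two
      (f := fun y => (‖g (s, y)‖₊ : ℝ≥0∞)) (g := fun _ => 1)
      hmeas.nnnorm.coe_nnreal_ennreal.aemeasurable aemeasurable_const
    have h3' : (∫⁻ y in B, (‖g (s, y)‖₊ : ℝ≥0∞) ^ (2:ℝ)) ^ ((1:ℝ)/2) ≤ ENNReal.ofReal K := by
      have hle : (∫⁻ y in B, (‖g (s, y)‖₊ : ℝ≥0∞) ^ (2:ℝ))
          ≤ ∫⁻ y, (‖vt s y‖₊ : ℝ≥0∞) ^ (2:ℝ) := by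
        simp only [heq]
        exact setLIntegral_le_lintegral _ _
      have hnorm : (∫⁻ y, (‖vt s y‖₊ : ℝ≥0∞) ^ (2:ℝ)) ^ ((1:ℝ)/2) ≤ ENNReal.ofReal K := by
        have := htime s hsT
        rwa [eLpNorm_eq_lintegral_rpow_enorm_toReal (by norm_num) (by norm_num),
          ENNReal.toReal_ofNat] at this
      exact le_trans (ENNReal.rpow_le_rpow hle (by norm_num)) hnorm
    simp only [Pi.mul_apply, mul_one, ENNReal.one_rpow] at hCS
    calc (∫⁻ y in B, (‖g (s, y)‖₊ : ℝ≥0∞))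
        ≤ (∫⁻ y in B, (‖g (s, y)‖₊ : ℝ≥0∞) ^ (2:ℝ)) ^ ((1:ℝ)/2)
            * (∫⁻ _ in B, (1:ℝ≥0∞)) ^ ((1:ℝ)/2) := hCS
      _ ≤ ENNReal.ofReal K * (volume B) ^ (1/2 : ℝ) := by
          rw [setLIntegral_one]
          exact mul_le_mul_left h3' _
  -- Fubini
  have hswap : ∫⁻ y in B, F y
      = ∫⁻ s in Ioo t₁ t₂, ∫⁻ y in B, (‖g (s, y)‖₊ : ℝ≥0∞) :=
    lintegral_lintegral_swap hgm2.aemeasurable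
  have htot : ∫⁻ y in B, F y
      ≤ ENNReal.ofReal K * (volume B) ^ (1/2:ℝ) * ENNReal.ofReal (t₂ - t₁) := by
    rw [hswap]
    calc ∫⁻ s in Ioo t₁ t₂, ∫⁻ y in B, (‖g (s, y)‖₊ : ℝ≥0∞)
        ≤ ∫⁻ _ in Ioo t₁ t₂, ENNReal.ofReal K * (volume B) ^ (1/2:ℝ) := by
          apply lintegral_mono_ae
          rw [ae_restrict_iff' measurableSet_Ioo]
          exact Eventually.of_forall hslice
      _ = ENNReal.ofReal K * (volume B) ^ (1/2:ℝ) * ENNReal.ofReal (t₂ - t₁) := by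
          rw [setLIntegral_const, Real.volume_Ioo]
  have hRHSfin : ENNReal.ofReal K * (volume B) ^ (1/2:ℝ) * ENNReal.ofReal (t₂ - t₁) ≠ ⊤ := by
    apply ENNReal.mul_ne_top
    apply ENNReal.mul_ne_top ENNReal.ofReal_ne_top
    · rw [hV]; exact ENNReal.rpow_ne_top_of_nonneg (by norm_num) ENNReal.ofReal_ne_top
    · exact ENNReal.ofReal_ne_top
  have hFfin : ∀ᵐ y ∂(volume.restrict B), F y < ⊤ :=
    ae_lt_top hFm (ne_top_of_le_ne_top hRHSfin htot)
  -- FTC step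
  have hFTC : ∀ y : E3, F y < ⊤ → ENNReal.ofReal |v t₁ y - v t₂ y| ≤ F y := by
    intro y hy
    have hmeas : Measurable fun s => g (s, y) := hgm.comp measurable_prodMk_right
    have haeeq : ∀ᵐ s ∂(volume.restrict (Ioo t₁ t₂)), g (s, y) = vt s y :=
      (ae_restrict_iff' measurableSet_Ioo).mpr
        (Eventually.of_forall (fun s hs => hg s (hsub hs) y))
    have hFy : ∫⁻ s in Ioo t₁ t₂, (‖vt s y‖₊ : ℝ≥0∞) = F y := by
      rw [hFdef]
      apply lintegral_congr_ae
      filter_upwards [haeeq] with s hs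
      rw [hs]
    have hIoo : IntegrableOn (fun s => vt s y) (Ioo t₁ t₂) volume := by
      constructor
      · exact hmeas.aestronglyMeasurable.congr haeeq
      · show (∫⁻ s in Ioo t₁ t₂, (‖vt s y‖₊ : ℝ≥0∞)) < ⊤
        rw [hFy]; exact hy
    have hIoc : IntegrableOn (fun s => vt s y) (Ioc t₁ t₂) volume :=
      (integrableOn_Ioc_iff_integrableOn_Ioo).mpr hIoo
    have hii : IntervalIntegrable (fun s => vt s y) volume t₁ t₂ := by
      constructor
      · exact hIoc
      · rw [Ioc_eq_empty (by linarith)]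
        exact integrableOn_empty
    have hint : ∫ s in t₁..t₂, vt s y = v t₂ y - v t₁ y := by
      apply intervalIntegral.integral_eq_sub_of_hasDerivAt
      · intro s hs
        rw [uIcc_of_le hlt.le] at hs
        exact hderiv y s ⟨h1.1.trans hs.1, hs.2.trans h2.2⟩
      · exact hii
    have habs : |v t₁ y - v t₂ y| ≤ ∫ s in Ioc t₁ t₂, |vt s y| := by
      rw [abs_sub_comm, ← hint, intervalIntegral.integral_of_le hlt.le]
      simpa [Real.norm_eq_abs] using
        norm_integral_le_integral_norm (μ := volume.restrict (Ioc t₁ t₂)) (fun s => vt s y)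
    have hlift : ENNReal.ofReal (∫ s in Ioc t₁ t₂, |vt s y|)
        = ∫⁻ s in Ioc t₁ t₂, (‖vt s y‖₊ : ℝ≥0∞) := by
      exact ofReal_integral_norm_eq_lintegral_enorm hIoc
    have hIocIoo : ∫⁻ s in Ioc t₁ t₂, (‖vt s y‖₊ : ℝ≥0∞)
        = ∫⁻ s in Ioo t₁ t₂, (‖vt s y‖₊ : ℝ≥0∞) :=
      (setLIntegral_congr Ioo_ae_eq_Ioc).symm
    calc ENNReal.ofReal |v t₁ y - v t₂ y|
        ≤ ENNReal.ofReal (∫ s in Ioc t₁ t₂, |vt s y|) := ENNReal.ofReal_le_ofReal habs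
      _ = ∫⁻ s in Ioo t₁ t₂, (‖vt s y‖₊ : ℝ≥0∞) := by rw [hlift, hIocIoo]
      _ = F y := hFy
  -- choose a good point y
  set c : ℝ := K * (t₂ - t₁) * w ^ (-(1/2):ℝ) with hcdef
  have hc0 : 0 ≤ c := by
    apply mul_nonneg (mul_nonneg hK (by linarith)) (Real.rpow_nonneg hw.le _)
  have hyε : ∀ ε : ℝ, 0 < ε → ∃ y ∈ B, |v t₁ y - v t₂ y| ≤ c + ε := by
    intro ε hε
    by_contra hcon
    push_neg at hcon
    have hlow : ENNReal.ofReal (c + ε) * volume B ≤ ∫⁻ y in B, F y := by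
      calc ENNReal.ofReal (c + ε) * volume B
          = ∫⁻ _ in B, ENNReal.ofReal (c + ε) := by rw [setLIntegral_const]
        _ ≤ ∫⁻ y in B, ENNReal.ofReal |v t₁ y - v t₂ y| := by
            apply lintegral_mono_ae
            rw [ae_restrict_iff' hBm]
            exact Eventually.of_forall fun y hy =>
              ENNReal.ofReal_le_ofReal (hcon y hy).le
        _ ≤ ∫⁻ y in B, F y := by
            apply lintegral_mono_ae
            filter_upwards [hFfin] with y hy
            exact hFTC y hy
    have hchain : ENNReal.ofReal (c + ε) * volume B
        ≤ ENNReal.ofReal K * (volume B) ^ (1/2:ℝ) * ENNReal.ofReal (t₂ - t₁) :=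
      hlow.trans htot
    -- compute both sides as ofReal of real numbers
    have hw12 : (volume B) ^ (1/2:ℝ) = ENNReal.ofReal (w ^ (1/2:ℝ)) := by
      rw [hV, ← ENNReal.ofReal_rpow_of_pos hw]
    have hRHS : ENNReal.ofReal K * (volume B) ^ (1/2:ℝ) * ENNReal.ofReal (t₂ - t₁)
        = ENNReal.ofReal (K * (t₂ - t₁) * w ^ (1/2:ℝ)) := by
      rw [hw12, ← ENNReal.ofReal_mul hK, ← ENNReal.ofReal_mul
        (mul_nonneg hK (Real.rpow_nonneg hw.le _))]
      ring_nf
    have hcw : c * w = K * (t₂ - t₁) * w ^ (1/2:ℝ) := by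
      rw [hcdef]
      have : w ^ (-(1/2):ℝ) * w = w ^ (1/2:ℝ) := by
        nth_rewrite 2 [show w = w ^ (1:ℝ) by rw [Real.rpow_one]]
        rw [← Real.rpow_add hw]
        norm_num
      rw [mul_assoc, this]
    have hLHS : ENNReal.ofReal (c + ε) * volume B
        = ENNReal.ofReal (K * (t₂ - t₁) * w ^ (1/2:ℝ)) + ENNReal.ofReal (ε * w) := by
      rw [hV, ← ENNReal.ofReal_mul (by linarith), add_mul, hcw,
        ENNReal.ofReal_add (by rw [← hcw]; positivity) (by positivity)]
    rw [hLHS, hRHS] at hchain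
    have hfin : ENNReal.ofReal (K * (t₂ - t₁) * w ^ (1/2:ℝ)) ≠ ⊤ := ENNReal.ofReal_ne_top
    have hpos : (0:ℝ≥0∞) < ENNReal.ofReal (ε * w) := ENNReal.ofReal_pos.mpr (by positivity)
    have := ENNReal.lt_add_right hfin hpos.ne'
    exact absurd (this.trans_le hchain) (lt_irrefl _)
  -- conclusion
  apply real_le_of_forall_pos
  intro ε hε
  obtain ⟨y, hyB, hy⟩ := hyε ε hε
  have hxy : ‖x - y‖ ^ α ≤ r ^ α := by
    apply Real.rpow_le_rpow (norm_nonneg _) _ hα0.le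
    rw [← dist_eq_norm, dist_comm]
    exact (Metric.mem_ball.mp hyB).le
  have s1 : |v t₁ x - v t₁ y| ≤ M * r ^ α :=
    (hsp t₁ h1 x y).trans (mul_le_mul_of_nonneg_left hxy hM)
  have s2 : |v t₂ y - v t₂ x| ≤ M * r ^ α := by
    refine (hsp t₂ h2 y x).trans ?_
    rw [show y - x = -(x - y) by ring, norm_neg]
    exact mul_le_mul_of_nonneg_left hxy hM
  have tri : |v t₁ x - v t₂ x| ≤ |v t₁ x - v t₁ y| + |v t₁ y - v t₂ y| + |v t₂ y - v t₂ x| := by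
    have h1t := abs_sub_le (v t₁ x) (v t₁ y) (v t₂ y)
    have h2t := abs_sub_le (v t₁ x) (v t₂ y) (v t₂ x)
    linarith
  calc |v t₁ x - v t₂ x|
      ≤ |v t₁ x - v t₁ y| + |v t₁ y - v t₂ y| + |v t₂ y - v t₂ x| := tri
    _ ≤ M * r ^ α + (c + ε) + M * r ^ α := by
        exact add_le_add (add_le_add s1 hy) s2
    _ = 2 * (M * r ^ α) + K * (t₂ - t₁) * ((2*r)^3 : ℝ) ^ (-(1/2) : ℝ) + ε := by
        rw [hcdef, hwdef]; ring

end HolderHelpers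

open MeasureTheory Set ENNReal in
/-- Lemma `holder-lem`: if `v ∈ L^∞(0,T;C^α(ℝ³))` with
`α ∈ (0,1/2]` and `∂_t v ∈ L^∞(0,T;L²(ℝ³))`, then
`v ∈ C_x^α C_t^{α/2}(ℝ³ × [0,T])`. -/
theorem holder_space_time
    (α : ℝ) (hα0 : 0 < α) (hα : α ≤ 1 / 2)
    (T : ℝ) (hT : 0 < T)
    (v vt : ℝ → E3 → ℝ)
    (hderiv : ∀ x : E3, ∀ t ∈ Icc (0:ℝ) T, HasDerivAt (fun s => v s x) (vt t x) t)
    (M : ℝ)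
    (hspace : ∀ t ∈ Icc (0:ℝ) T,
      (∀ x : E3, |v t x| ≤ M) ∧ ∀ x y : E3, |v t x - v t y| ≤ M * ‖x - y‖ ^ α)
    (K : ℝ)
    (htime : ∀ t ∈ Icc (0:ℝ) T, eLpNorm (vt t) 2 volume ≤ ENNReal.ofReal K) :
    ∃ C' : ℝ,
      (∀ t ∈ Icc (0:ℝ) T, ∀ x y : E3, |v t x - v t y| ≤ C' * ‖x - y‖ ^ α) ∧
      (∀ x : E3, ∀ t₁ ∈ Icc (0:ℝ) T, ∀ t₂ ∈ Icc (0:ℝ) T,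
        |v t₁ x - v t₂ x| ≤ C' * |t₁ - t₂| ^ (α / 2)) := by
  set K' := max K 0 with hK'def
  have hK'0 : 0 ≤ K' := le_max_right _ _
  have htime' : ∀ t ∈ Icc (0:ℝ) T, eLpNorm (vt t) 2 volume ≤ ENNReal.ofReal K' :=
    fun t ht => (htime t ht).trans (ENNReal.ofReal_le_ofReal (le_max_left _ _))
  have hM : 0 ≤ M :=
    le_trans (abs_nonneg _) ((hspace 0 ⟨le_refl 0, hT.le⟩).1 (fun _ => 0))
  set C' := 3 * M + K' with hC'def
  have hC'M : M ≤ C' := by linarith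
  have hC'2M : 2 * M + K' ≤ C' := by linarith
  refine ⟨C', ?_, ?_⟩
  · intro t ht x y
    exact le_trans ((hspace t ht).2 x y)
      (mul_le_mul_of_nonneg_right hC'M (Real.rpow_nonneg (norm_nonneg _) _))
  · have key : ∀ t₁ ∈ Icc (0:ℝ) T, ∀ t₂ ∈ Icc (0:ℝ) T, t₁ < t₂ →
        ∀ x : E3, |v t₁ x - v t₂ x| ≤ C' * (t₂ - t₁) ^ (α/2) := by
      intro t₁ h1 t₂ h2 hlt x
      set δ := t₂ - t₁ with hδdef
      have hδ0 : 0 < δ := sub_pos.mpr hlt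
      by_cases hδ1 : 1 ≤ δ
      · -- crude bound
        have h2M : |v t₁ x - v t₂ x| ≤ 2 * M := by
          have a1 := (hspace t₁ h1).1 x
          have a2 := (hspace t₂ h2).1 x
          have := abs_sub (v t₁ x) (v t₂ x)
          linarith
        have hpow : 1 ≤ δ ^ (α/2) := Real.one_le_rpow hδ1 (by positivity)
        calc |v t₁ x - v t₂ x| ≤ 2 * M := h2M
          _ = (2 * M) * 1 := by ring
          _ ≤ C' * δ ^ (α/2) := by
              apply mul_le_mul (by linarith) hpow zero_le_one (by linarith)
      · push_neg at hδ1
        set r := δ ^ (2 / (2*α+3)) with hrdef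
        have hden : (0:ℝ) < 2*α+3 := by linarith
        have hr : 0 < r := Real.rpow_pos_of_pos hδ0 _
        have hcore := core_est α hα0 T hT v vt hderiv M hM
          (fun t ht => (hspace t ht).2) K' hK'0 htime' x h1 h2 hlt hr
        set β := 2*α/(2*α+3) with hβdef
        have e1 : r ^ α = δ ^ β := by
          rw [hrdef, ← Real.rpow_mul hδ0.le]
          congr 1
          rw [hβdef]; ring
        have e3 : r ^ (-(3/2) : ℝ) = δ ^ (-(3/(2*α+3)) : ℝ) := by
          rw [hrdef, ← Real.rpow_mul hδ0.le]
          congr 1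
          ring
        have e4 : ((2*r)^3 : ℝ) ^ (-(1/2) : ℝ) ≤ r ^ (-(3/2) : ℝ) := by
          have h8 : ((2*r)^3 : ℝ) = 8 * r^3 := by ring
          rw [h8, Real.mul_rpow (by norm_num) (by positivity)]
          have h81 : (8:ℝ) ^ (-(1/2) : ℝ) ≤ 1 :=
            Real.rpow_le_one_of_one_le_of_nonpos (by norm_num) (by norm_num)
          have hr3 : ((r^3 : ℝ)) ^ (-(1/2) : ℝ) = r ^ (-(3/2) : ℝ) := by
            rw [show (r^3 : ℝ) = r ^ (3:ℝ) from (Real.rpow_natCast r 3).symm,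
              ← Real.rpow_mul hr.le]
            norm_num
          rw [hr3]
          nth_rewrite 2 [show r ^ (-(3/2):ℝ) = 1 * r ^ (-(3/2):ℝ) by ring]
          exact mul_le_mul_of_nonneg_right h81 (Real.rpow_nonneg hr.le _)
        have e5 : δ * δ ^ (-(3/(2*α+3)) : ℝ) = δ ^ β := by
          nth_rewrite 1 [show δ = δ ^ (1:ℝ) from (Real.rpow_one δ).symm]
          rw [← Real.rpow_add hδ0]
          congr 1
          rw [hβdef]
          field_simp
          ring
        have hδβ : 0 ≤ δ ^ β := Real.rpow_nonneg hδ0.le _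
        have e6 : K' * (t₂ - t₁) * ((2*r)^3 : ℝ) ^ (-(1/2) : ℝ) ≤ K' * δ ^ β := by
          calc K' * (t₂ - t₁) * ((2*r)^3 : ℝ) ^ (-(1/2) : ℝ)
              ≤ K' * (t₂ - t₁) * r ^ (-(3/2) : ℝ) :=
                mul_le_mul_of_nonneg_left e4 (mul_nonneg hK'0 (by linarith))
            _ = K' * (δ * δ ^ (-(3/(2*α+3)) : ℝ)) := by rw [e3]; ring
            _ = K' * δ ^ β := by rw [e5]
        have hβα : α/2 ≤ β := by
          rw [hβdef, div_le_div_iff₀ (by norm_num) hden]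
          nlinarith
        have e7 : δ ^ β ≤ δ ^ (α/2) := Real.rpow_le_rpow_of_exponent_ge hδ0 hδ1.le hβα
        have efin : 2 * (M * r ^ α) + K' * (t₂ - t₁) * ((2*r)^3 : ℝ) ^ (-(1/2) : ℝ)
            ≤ (2 * M + K') * δ ^ β := by
          rw [e1]
          linarith
        calc |v t₁ x - v t₂ x|
            ≤ 2 * (M * r ^ α) + K' * (t₂ - t₁) * ((2*r)^3 : ℝ) ^ (-(1/2) : ℝ) := hcore
          _ ≤ (2 * M + K') * δ ^ β := efin
          _ ≤ C' * δ ^ (α/2) := by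
              have hh1 := mul_le_mul_of_nonneg_left e7 (by linarith : (0:ℝ) ≤ 2*M+K')
              have hh2 := mul_le_mul_of_nonneg_right hC'2M
                (Real.rpow_nonneg hδ0.le (α/2))
              linarith
    intro x t₁ h1 t₂ h2
    rcases lt_trichotomy t₁ t₂ with h | h | h
    · have := key t₁ h1 t₂ h2 h x
      rwa [show |t₁ - t₂| = t₂ - t₁ by rw [abs_sub_comm]; exact abs_of_pos (by linarith)]
    · subst h
      simp only [sub_self, abs_zero]
      rw [Real.zero_rpow (by positivity), mul_zero]
    · have := key t₂ h2 t₁ h1 h x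
      rw [abs_sub_comm]
      rwa [show |t₁ - t₂| = t₁ - t₂ from abs_of_pos (by linarith)]
end
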